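/- arXiv:2408.17053 — 6 statements merged into one kernel-verified Lean document; each statement's English description precedes it below -/
import Mathlib

section
/- Let (Ω, 𝓕, μ) be a standard Borel probability space, X : Ω → 𝒳 measurable, T : Ω → {0, 1} ⊆ ℝ measurable (binary), and Y₁, Y₀ : Ω → ℝ square-integrable. Define the observed outcome Y = T·Y₁ + (1 − T)·Y₀. Assume unconfoundedness: (Y₁, Y₀) is conditionally independent of T given σ(X). Then μ[Y·T | σ(X)] = μ[T | σ(X)] · μ[Y₁ | σ(X)] μ-almost everywhere. -/
open MeasureTheory ProbabilityTheory

/-- Kernel step: from conditional independence of `P` and `T` given `m'`, and `P =ᵐ P'` with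
`P'` measurable, deduce the condexp product factorization for preimages of `P'` and `{T = 1}`. -/
theorem aux_kernel_fact {Ω : Type*} {m' : MeasurableSpace Ω} {mΩ : MeasurableSpace Ω}
    [StandardBorelSpace Ω] (hm' : m' ≤ mΩ)
    (μ : Measure Ω) [IsProbabilityMeasure μ]
    (T : Ω → ℝ) (hT : Measurable T)
    (P P' : Ω → ℝ × ℝ) (hP' : Measurable P') (hPP' : P =ᵐ[μ] P')
    (h_unconf : CondIndepFun m' hm' P T μ)
    (B : Set (ℝ × ℝ)) (hB : MeasurableSet B) :
    μ[((P' ⁻¹' B) ∩ (T ⁻¹' {1})).indicator (fun _ => (1 : ℝ)) | m'] =ᵐ[μ]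
      fun ω => (μ[(P' ⁻¹' B).indicator (fun _ => (1 : ℝ)) | m']) ω
        * (μ[(T ⁻¹' {1}).indicator (fun _ => (1 : ℝ)) | m']) ω := by
  have hE : MeasurableSet (T ⁻¹' {1}) := hT (measurableSet_singleton 1)
  have hA' : MeasurableSet (P' ⁻¹' B) := hP' hB
  -- kernel independence, transferred from the trimmed measure to `μ`
  have h1 : ∀ᵐ ω ∂μ, condExpKernel μ m' ω (P ⁻¹' B ∩ T ⁻¹' {1})
      = condExpKernel μ m' ω (P ⁻¹' B) * condExpKernel μ m' ω (T ⁻¹' {1}) :=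
    ae_of_ae_trim hm'
      (h_unconf (P ⁻¹' B) (T ⁻¹' {1}) ⟨B, hB, rfl⟩ ⟨{1}, measurableSet_singleton 1, rfl⟩)
  -- null set where `P ≠ P'`
  have hNnull : μ (toMeasurable μ {ω | P ω ≠ P' ω}) = 0 := by
    rw [measure_toMeasurable]
    exact ae_iff.mp hPP'
  have hNmeas : MeasurableSet (toMeasurable μ {ω | P ω ≠ P' ω}) :=
    measurableSet_toMeasurable _ _
  have hNsub : {ω | P ω ≠ P' ω} ⊆ toMeasurable μ {ω | P ω ≠ P' ω} := subset_toMeasurable _ _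
  -- the conditional kernel vanishes a.e. on the null set
  have hκN : ∀ᵐ ω ∂μ, condExpKernel μ m' ω (toMeasurable μ {ω | P ω ≠ P' ω}) = 0 := by
    have hc : (fun ω => (condExpKernel μ m' ω (toMeasurable μ {ω | P ω ≠ P' ω})).toReal)
        =ᵐ[μ] μ⟦toMeasurable μ {ω | P ω ≠ P' ω} | m'⟧ :=
      condExpKernel_ae_eq_condExp hm' hNmeas
    have hzero : (μ⟦toMeasurable μ {ω | P ω ≠ P' ω} | m'⟧ : Ω → ℝ) =ᵐ[μ] 0 := by
      have hind : ((toMeasurable μ {ω | P ω ≠ P' ω}).indicator (fun _ => (1:ℝ))) =ᵐ[μ] 0 := by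
        have hmem : ∀ᵐ ω ∂μ, ω ∉ toMeasurable μ {ω | P ω ≠ P' ω} := by
          rw [ae_iff]; simpa using hNnull
        filter_upwards [hmem] with ω hω
        simp [Set.indicator_apply, hω]
      calc (μ⟦toMeasurable μ {ω | P ω ≠ P' ω} | m'⟧ : Ω → ℝ)
          =ᵐ[μ] μ[(0 : Ω → ℝ) | m'] := condExp_congr_ae hind
        _ = 0 := condExp_zero
    filter_upwards [hc.trans hzero] with ω hω
    simp only [Pi.zero_apply] at hω
    exact ((ENNReal.toReal_eq_zero_iff _).mp hω).resolve_right (measure_ne_top _ _)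
  -- replace `P` by `P'` in the kernel identity
  have hswap : ∀ᵐ ω ∂μ, condExpKernel μ m' ω (P' ⁻¹' B ∩ T ⁻¹' {1})
      = condExpKernel μ m' ω (P' ⁻¹' B) * condExpKernel μ m' ω (T ⁻¹' {1}) := by
    filter_upwards [h1, hκN] with ω h1ω hNω
    set N := toMeasurable μ {ω | P ω ≠ P' ω}
    have key : ∀ U V : Set Ω, U ⊆ V ∪ N → V ⊆ U ∪ N →
        condExpKernel μ m' ω U = condExpKernel μ m' ω V := by
      intro U V hUV hVU
      refine le_antisymm ?_ ?_
      · calc condExpKernel μ m' ω U ≤ condExpKernel μ m' ω (V ∪ N) := measure_mono hUV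
          _ ≤ condExpKernel μ m' ω V + condExpKernel μ m' ω N := measure_union_le _ _
          _ = condExpKernel μ m' ω V := by rw [hNω, add_zero]
      · calc condExpKernel μ m' ω V ≤ condExpKernel μ m' ω (U ∪ N) := measure_mono hVU
          _ ≤ condExpKernel μ m' ω U + condExpKernel μ m' ω N := measure_union_le _ _
          _ = condExpKernel μ m' ω U := by rw [hNω, add_zero]
    have e1 : condExpKernel μ m' ω (P' ⁻¹' B) = condExpKernel μ m' ω (P ⁻¹' B) := by
      refine key _ _ ?_ ?_
      · intro x hx
        by_cases hxN : x ∈ N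
        · exact Or.inr hxN
        · exact Or.inl (by
            have : P x = P' x := by
              by_contra hne; exact hxN (hNsub hne)
            simpa [Set.mem_preimage, this] using hx)
      · intro x hx
        by_cases hxN : x ∈ N
        · exact Or.inr hxN
        · exact Or.inl (by
            have : P x = P' x := by
              by_contra hne; exact hxN (hNsub hne)
            simpa [Set.mem_preimage, ← this] using hx)
    have e2 : condExpKernel μ m' ω (P' ⁻¹' B ∩ T ⁻¹' {1})
        = condExpKernel μ m' ω (P ⁻¹' B ∩ T ⁻¹' {1}) := by
      refine key _ _ ?_ ?_
      · intro x hx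
        by_cases hxN : x ∈ N
        · exact Or.inr hxN
        · refine Or.inl ⟨?_, hx.2⟩
          have : P x = P' x := by by_contra hne; exact hxN (hNsub hne)
          simpa [Set.mem_preimage, this] using hx.1
      · intro x hx
        by_cases hxN : x ∈ N
        · exact Or.inr hxN
        · refine Or.inl ⟨?_, hx.2⟩
          have : P x = P' x := by by_contra hne; exact hxN (hNsub hne)
          simpa [Set.mem_preimage, ← this] using hx.1
    rw [e1, e2, h1ω]
  -- convert to conditional expectations
  have hc1 : (fun ω => (condExpKernel μ m' ω (P' ⁻¹' B ∩ T ⁻¹' {1})).toReal)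
      =ᵐ[μ] μ⟦P' ⁻¹' B ∩ T ⁻¹' {1} | m'⟧ := condExpKernel_ae_eq_condExp hm' (hA'.inter hE)
  have hc2 : (fun ω => (condExpKernel μ m' ω (P' ⁻¹' B)).toReal)
      =ᵐ[μ] μ⟦P' ⁻¹' B | m'⟧ := condExpKernel_ae_eq_condExp hm' hA'
  have hc3 : (fun ω => (condExpKernel μ m' ω (T ⁻¹' {1})).toReal)
      =ᵐ[μ] μ⟦T ⁻¹' {1} | m'⟧ := condExpKernel_ae_eq_condExp hm' hE
  filter_upwards [hswap, hc1, hc2, hc3] with ω hωs hω1 hω2 hω3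
  show (μ⟦P' ⁻¹' B ∩ T ⁻¹' {1} | m'⟧) ω = (μ⟦P' ⁻¹' B | m'⟧) ω * (μ⟦T ⁻¹' {1} | m'⟧) ω
  rw [← hω1, ← hω2, ← hω3, hωs, ENNReal.toReal_mul]


theorem aux_main {Ω : Type*} {m' m₂ : MeasurableSpace Ω} {mΩ : MeasurableSpace Ω}
    (μ : Measure Ω) [IsProbabilityMeasure μ] (hm' : m' ≤ mΩ) (hm₂ : m₂ ≤ mΩ)
    (T : Ω → ℝ) (hT : Measurable T) (hT_bin : ∀ ω, T ω = 0 ∨ T ω = 1)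
    (Y₁ : Ω → ℝ) (hY₁_int : Integrable Y₁ μ)
    (P' : Ω → ℝ × ℝ) (hP' : Measurable P')
    (hfst : Y₁ =ᵐ[μ] fun ω => (P' ω).1)
    (hY₁m₂ : StronglyMeasurable[m₂] fun ω => (P' ω).1)
    (hgen : ∀ A : Set Ω, MeasurableSet[m₂] A → ∃ B : Set (ℝ × ℝ), MeasurableSet B ∧ P' ⁻¹' B = A)
    (hfact : ∀ B : Set (ℝ × ℝ), MeasurableSet B →
      μ[((P' ⁻¹' B) ∩ (T ⁻¹' {1})).indicator (fun _ => (1 : ℝ)) | m'] =ᵐ[μ]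
        fun ω => (μ[(P' ⁻¹' B).indicator (fun _ => (1 : ℝ)) | m']) ω
          * (μ[(T ⁻¹' {1}).indicator (fun _ => (1 : ℝ)) | m']) ω) :
    μ[fun ω => T ω * Y₁ ω | m'] =ᵐ[μ] fun ω => (μ[T | m']) ω * (μ[Y₁ | m']) ω := by
  haveI h1' : IsFiniteMeasure (μ.trim hm') := isFiniteMeasure_trim hm'
  haveI h2' : IsFiniteMeasure (μ.trim hm₂) := isFiniteMeasure_trim hm₂
  set f : Ω → ℝ := μ[T | m'] with hfdef
  have hT01 : ∀ ω, 0 ≤ T ω ∧ T ω ≤ 1 := by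
    intro ω; rcases hT_bin ω with h | h <;> simp [h]
  have hT_int : Integrable T μ := by
    refine (integrable_const (1 : ℝ)).mono' hT.aestronglyMeasurable ?_
    filter_upwards with ω
    rw [Real.norm_eq_abs, abs_le]
    exact ⟨by linarith [(hT01 ω).1], (hT01 ω).2⟩
  have hf_bound : ∀ᵐ ω ∂μ, ‖f ω‖ ≤ 1 := by
    have h0 : 0 ≤ᵐ[μ] f := condExp_nonneg (Filter.Eventually.of_forall fun ω => (hT01 ω).1)
    have h1 : f ≤ᵐ[μ] μ[(fun _ => (1:ℝ)) | m'] :=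
      condExp_mono hT_int (integrable_const 1)
        (Filter.Eventually.of_forall fun ω => (hT01 ω).2)
    have hc : μ[(fun _ => (1:ℝ)) | m'] = fun _ => (1:ℝ) := condExp_const hm' 1
    filter_upwards [h0, h1] with ω hω0 hω1
    simp only [Pi.zero_apply] at hω0
    rw [hc] at hω1
    rw [Real.norm_eq_abs, abs_le]
    exact ⟨by linarith, hω1⟩
  have hE : MeasurableSet (T ⁻¹' {1}) := hT (measurableSet_singleton 1)
  have hTE : T = (T ⁻¹' {1}).indicator (fun _ => (1:ℝ)) := by
    funext ω
    rcases hT_bin ω with h | h <;> simp [Set.indicator_apply, Set.mem_preimage, h]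
  have hind_int : ∀ {u : Set Ω}, MeasurableSet u →
      Integrable (u.indicator fun _ => (1:ℝ)) μ :=
    fun h => (integrable_const 1).indicator h
  have hfE : f = μ[(T ⁻¹' {1}).indicator (fun _ => (1:ℝ)) | m'] := by
    conv_lhs => rw [hfdef, hTE]
  -- the bounded comparison functions
  set u₁ : Set Ω → Ω → ℝ := fun s ω => s.indicator (fun _ => (1:ℝ)) ω * T ω with hu₁def
  set u₂ : Set Ω → Ω → ℝ := fun s ω => s.indicator (fun _ => (1:ℝ)) ω * f ω with hu₂def
  have hind_bd : ∀ (s : Set Ω), ∀ᵐ ω ∂μ, ‖s.indicator (fun _ => (1:ℝ)) ω‖ ≤ 1 := by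
    intro s
    filter_upwards with ω
    by_cases h : ω ∈ s <;> simp [Set.indicator_apply, h]
  have hu₁_int : ∀ (s : Set Ω), MeasurableSet s → Integrable (u₁ s) μ := fun s hs =>
    hT_int.bdd_mul (stronglyMeasurable_const.indicator hs).aestronglyMeasurable (hind_bd s)
  have hu₂_int : ∀ (s : Set Ω), MeasurableSet s → Integrable (u₂ s) μ := fun s hs =>
    integrable_condExp.bdd_mul
      (stronglyMeasurable_const.indicator hs).aestronglyMeasurable (hind_bd s)
  -- Lemma 1: set-integral identity over preimage sets
  have lem1 : ∀ B : Set (ℝ × ℝ), MeasurableSet B → ∀ s : Set Ω, MeasurableSet[m'] s →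
      ∫ ω in P' ⁻¹' B, u₁ s ω ∂μ = ∫ ω in P' ⁻¹' B, u₂ s ω ∂μ := by
    intro B hB s hs
    have hs' : MeasurableSet s := hm' s hs
    have hA' : MeasurableSet (P' ⁻¹' B) := hP' hB
    -- LHS = μ ((P'⁻¹B ∩ E) ∩ s).toReal
    have hL : ∫ ω in P' ⁻¹' B, u₁ s ω ∂μ = (μ ((P' ⁻¹' B ∩ T ⁻¹' {1}) ∩ s)).toReal := by
      have hptw : ∀ ω, u₁ s ω = (s ∩ T ⁻¹' {1}).indicator (fun _ => (1:ℝ)) ω := by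
        intro ω
        simp only [hu₁def, Set.indicator_apply, Set.mem_inter_iff]
        by_cases h1 : ω ∈ s
        · by_cases h2 : ω ∈ T ⁻¹' {1}
          · have hTω : T ω = 1 := h2
            simp [h1, h2, hTω]
          · have hTω : T ω = 0 := by
              rcases hT_bin ω with h | h
              · exact h
              · exact absurd (show ω ∈ T ⁻¹' {1} by simp [Set.mem_preimage, h]) h2
            simp [h1, h2, hTω]
        · simp [h1]
      rw [integral_congr_ae (Filter.Eventually.of_forall fun ω => hptw ω)]
      rw [setIntegral_indicator (hs'.inter hE)]
      simp only [integral_const, smul_eq_mul, mul_one]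
      rw [measureReal_restrict_apply_univ, measureReal_def]
      have hseteq : P' ⁻¹' B ∩ (s ∩ T ⁻¹' {1}) = (P' ⁻¹' B ∩ T ⁻¹' {1}) ∩ s := by
        ext x; simp only [Set.mem_inter_iff]; tauto
      rw [hseteq]
    -- RHS = ∫ over (P'⁻¹B ∩ s) of f
    have hR : ∫ ω in P' ⁻¹' B, u₂ s ω ∂μ = ∫ ω in P' ⁻¹' B ∩ s, f ω ∂μ := by
      have hptw : ∀ ω, u₂ s ω = s.indicator f ω := by
        intro ω
        rw [hu₂def]
        by_cases h1 : ω ∈ s <;> simp [Set.indicator_apply, h1]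
      rw [integral_congr_ae (Filter.Eventually.of_forall fun ω => hptw ω)]
      rw [setIntegral_indicator hs']
    rw [hL, hR]
    -- middle chain via conditional expectations
    have c1 : (μ ((P' ⁻¹' B ∩ T ⁻¹' {1}) ∩ s)).toReal
        = ∫ ω in s, (μ[((P' ⁻¹' B) ∩ (T ⁻¹' {1})).indicator (fun _ => (1:ℝ)) | m']) ω ∂μ := by
      rw [setIntegral_condExp hm' (hind_int (hA'.inter hE)) hs]
      rw [setIntegral_indicator (hA'.inter hE)]
      simp only [integral_const, smul_eq_mul, mul_one]
      rw [measureReal_restrict_apply_univ, measureReal_def]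
      have hseteq : s ∩ (P' ⁻¹' B ∩ T ⁻¹' {1}) = (P' ⁻¹' B ∩ T ⁻¹' {1}) ∩ s := by
        ext x; simp only [Set.mem_inter_iff]; tauto
      rw [hseteq]
    have c2 : ∫ ω in s, (μ[((P' ⁻¹' B) ∩ (T ⁻¹' {1})).indicator (fun _ => (1:ℝ)) | m']) ω ∂μ
        = ∫ ω in s, (μ[(P' ⁻¹' B).indicator (fun _ => (1:ℝ)) | m']) ω * f ω ∂μ := by
      refine integral_congr_ae (ae_restrict_of_ae ?_)
      filter_upwards [hfact B hB] with ω hω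
      rw [hω, ← hfE]
    have hpull : μ[f * ((P' ⁻¹' B).indicator fun _ => (1:ℝ)) | m']
        =ᵐ[μ] f * μ[(P' ⁻¹' B).indicator (fun _ => (1:ℝ)) | m'] :=
      condExp_stronglyMeasurable_mul_of_bound hm' stronglyMeasurable_condExp
        (hind_int hA') 1 hf_bound
    have c3 : ∫ ω in s, (μ[(P' ⁻¹' B).indicator (fun _ => (1:ℝ)) | m']) ω * f ω ∂μ
        = ∫ ω in P' ⁻¹' B ∩ s, f ω ∂μ := by
      have hfair : Integrable (f * ((P' ⁻¹' B).indicator fun _ => (1:ℝ))) μ := by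
        have := ((hind_int hA').bdd_mul
          ((stronglyMeasurable_condExp.mono hm').aestronglyMeasurable) hf_bound)
        exact this
      calc ∫ ω in s, (μ[(P' ⁻¹' B).indicator (fun _ => (1:ℝ)) | m']) ω * f ω ∂μ
          = ∫ ω in s, (f * μ[(P' ⁻¹' B).indicator (fun _ => (1:ℝ)) | m']) ω ∂μ := by
            refine integral_congr_ae (ae_restrict_of_ae ?_)
            filter_upwards with ω
            simp [mul_comm]
        _ = ∫ ω in s, (μ[f * ((P' ⁻¹' B).indicator fun _ => (1:ℝ)) | m']) ω ∂μ := by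
            refine integral_congr_ae (ae_restrict_of_ae ?_)
            filter_upwards [hpull] with ω hω
            rw [hω]
        _ = ∫ ω in s, (f * ((P' ⁻¹' B).indicator fun _ => (1:ℝ))) ω ∂μ :=
            setIntegral_condExp hm' hfair hs
        _ = ∫ ω in s, (P' ⁻¹' B).indicator f ω ∂μ := by
            refine integral_congr_ae (ae_restrict_of_ae ?_)
            filter_upwards with ω
            by_cases h : ω ∈ P' ⁻¹' B <;> simp [Set.indicator_apply, h]
        _ = ∫ ω in s ∩ P' ⁻¹' B, f ω ∂μ := setIntegral_indicator hA'
        _ = ∫ ω in P' ⁻¹' B ∩ s, f ω ∂μ := by rw [Set.inter_comm]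
    rw [c1, c2, c3]
  -- Lemma 2: conditional expectations over m₂ agree
  have lem2 : ∀ s : Set Ω, MeasurableSet[m'] s →
      μ[u₁ s | m₂] =ᵐ[μ] μ[u₂ s | m₂] := by
    intro s hs
    have hs' : MeasurableSet s := hm' s hs
    refine (ae_eq_condExp_of_forall_setIntegral_eq hm₂ (hu₁_int s hs')
      (fun A hA _ => integrable_condExp.integrableOn)
      (fun A hA _ => ?_)
      stronglyMeasurable_condExp.aestronglyMeasurable).symm
    obtain ⟨B, hB, rfl⟩ := hgen A hA
    rw [setIntegral_condExp hm₂ (hu₂_int s hs') hA]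
    exact (lem1 B hB s hs).symm
  -- the set-integral identity at level m'
  have hs_int : ∀ s : Set Ω, MeasurableSet[m'] s →
      ∫ ω in s, T ω * Y₁ ω ∂μ = ∫ ω in s, f ω * Y₁ ω ∂μ := by
    intro s hs
    have hs' : MeasurableSet s := hm' s hs
    set g : Ω → ℝ := fun ω => (P' ω).1 with hgdef
    have hg_int : Integrable g μ := hY₁_int.congr hfst
    have hu₁m : AEStronglyMeasurable (u₁ s) μ :=
      (((stronglyMeasurable_const.indicator hs').measurable.mul hT).stronglyMeasurable
        ).aestronglyMeasurable
    have hu₂m : AEStronglyMeasurable (u₂ s) μ :=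
      ((stronglyMeasurable_const.indicator hs').aestronglyMeasurable.mul
        (stronglyMeasurable_condExp.mono hm').aestronglyMeasurable)
    have hu₁_bd : ∀ᵐ ω ∂μ, ‖u₁ s ω‖ ≤ 1 := by
      filter_upwards with ω
      simp only [hu₁def]
      by_cases h : ω ∈ s
      · rw [Set.indicator_of_mem h, one_mul, Real.norm_eq_abs, abs_le]
        exact ⟨by linarith [(hT01 ω).1], (hT01 ω).2⟩
      · simp [Set.indicator_of_notMem h]
    have hu₂_bd : ∀ᵐ ω ∂μ, ‖u₂ s ω‖ ≤ 1 := by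
      filter_upwards [hf_bound] with ω hω
      simp only [hu₂def]
      by_cases h : ω ∈ s
      · rw [Set.indicator_of_mem h, one_mul]
        exact hω
      · simp [Set.indicator_of_notMem h]
    have hgu₁_int : Integrable (g * u₁ s) μ := by
      have := hg_int.bdd_mul hu₁m hu₁_bd
      exact this.congr (by filter_upwards with ω; simp [mul_comm])
    have hgu₂_int : Integrable (g * u₂ s) μ := by
      have := hg_int.bdd_mul hu₂m hu₂_bd
      exact this.congr (by filter_upwards with ω; simp [mul_comm])
    have hpull₁ : μ[g * u₁ s | m₂] =ᵐ[μ] g * μ[u₁ s | m₂] :=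
      condExp_mul_of_stronglyMeasurable_left hY₁m₂ hgu₁_int (hu₁_int s hs')
    have hpull₂ : μ[g * u₂ s | m₂] =ᵐ[μ] g * μ[u₂ s | m₂] :=
      condExp_mul_of_stronglyMeasurable_left hY₁m₂ hgu₂_int (hu₂_int s hs')
    calc ∫ ω in s, T ω * Y₁ ω ∂μ
        = ∫ ω, s.indicator (fun ω => T ω * Y₁ ω) ω ∂μ := (integral_indicator hs').symm
      _ = ∫ ω, (g * u₁ s) ω ∂μ := by
          refine integral_congr_ae ?_
          filter_upwards [hfst] with ω hω
          by_cases h : ω ∈ s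
          · simp only [Set.indicator_of_mem h, Pi.mul_apply, hu₁def, one_mul]
            rw [hω]; ring
          · simp [Set.indicator_of_notMem h, hu₁def]
      _ = ∫ ω, (μ[g * u₁ s | m₂]) ω ∂μ := (integral_condExp hm₂).symm
      _ = ∫ ω, (g * μ[u₁ s | m₂]) ω ∂μ := integral_congr_ae hpull₁
      _ = ∫ ω, (g * μ[u₂ s | m₂]) ω ∂μ := by
          refine integral_congr_ae ?_
          filter_upwards [lem2 s hs] with ω hω
          simp only [Pi.mul_apply, hω]
      _ = ∫ ω, (μ[g * u₂ s | m₂]) ω ∂μ := (integral_congr_ae hpull₂).symm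
      _ = ∫ ω, (g * u₂ s) ω ∂μ := integral_condExp hm₂
      _ = ∫ ω, s.indicator (fun ω => f ω * Y₁ ω) ω ∂μ := by
          refine integral_congr_ae ?_
          filter_upwards [hfst] with ω hω
          by_cases h : ω ∈ s
          · simp only [Set.indicator_of_mem h, Pi.mul_apply, hu₂def, one_mul]
            rw [hω]; ring
          · simp [Set.indicator_of_notMem h, hu₂def]
      _ = ∫ ω in s, f ω * Y₁ ω ∂μ := integral_indicator hs'
  -- conclusion via uniqueness of conditional expectation
  have hTY₁_int : Integrable (fun ω => T ω * Y₁ ω) μ := by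
    refine hY₁_int.bdd_mul (c := 1) hT.aestronglyMeasurable ?_
    filter_upwards with ω
    rw [Real.norm_eq_abs, abs_le]
    exact ⟨by linarith [(hT01 ω).1], (hT01 ω).2⟩
  have hfY₁_int : Integrable (f * Y₁) μ :=
    hY₁_int.bdd_mul (stronglyMeasurable_condExp.mono hm').aestronglyMeasurable hf_bound
  have hpullf : μ[f * Y₁ | m'] =ᵐ[μ] f * μ[Y₁ | m'] :=
    condExp_stronglyMeasurable_mul_of_bound hm' stronglyMeasurable_condExp hY₁_int 1 hf_bound
  refine (ae_eq_condExp_of_forall_setIntegral_eq hm' hTY₁_int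
    (fun s _ _ => (integrable_condExp.bdd_mul
      (stronglyMeasurable_condExp.mono hm').aestronglyMeasurable hf_bound).integrableOn)
    (fun s hs _ => ?_)
    ((stronglyMeasurable_condExp.mul stronglyMeasurable_condExp).aestronglyMeasurable)).symm
  calc ∫ ω in s, f ω * (μ[Y₁|m']) ω ∂μ
      = ∫ ω in s, (μ[f * Y₁ | m']) ω ∂μ := by
        refine integral_congr_ae (ae_restrict_of_ae ?_)
        filter_upwards [hpullf] with ω hω
        rw [hω]; simp
    _ = ∫ ω in s, (f * Y₁) ω ∂μ := setIntegral_condExp hm' hfY₁_int hs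
    _ = ∫ ω in s, T ω * Y₁ ω ∂μ := by
        simp only [Pi.mul_apply]
        exact (hs_int s hs).symm

/-- Under unconfoundedness, the treated-group regression function is identified from the
observed outcome `Y = T·Y₁ + (1 - T)·Y₀`:
`μ[Y·T | σ(X)] = μ[T | σ(X)] · μ[Y₁ | σ(X)]` a.e. -/
theorem condexp_obs_mul_treatment_eq
    {Ω 𝒳 : Type*} {mΩ : MeasurableSpace Ω} [StandardBorelSpace Ω] [MeasurableSpace 𝒳]
    (μ : Measure Ω) [IsProbabilityMeasure μ]
    (X : Ω → 𝒳) (hX : Measurable X)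
    (T : Ω → ℝ) (hT : Measurable T) (hT_bin : ∀ ω, T ω = 0 ∨ T ω = 1)
    (Y₁ Y₀ : Ω → ℝ) (hY₁ : MemLp Y₁ 2 μ) (hY₀ : MemLp Y₀ 2 μ)
    (Y : Ω → ℝ) (hY : Y = fun ω => T ω * Y₁ ω + (1 - T ω) * Y₀ ω)
    (h_unconf : CondIndepFun (MeasurableSpace.comap X inferInstance) hX.comap_le
      (fun ω => (Y₁ ω, Y₀ ω)) T μ) :
    μ[fun ω => Y ω * T ω | MeasurableSpace.comap X inferInstance]
      =ᵐ[μ] fun ω => (μ[T | MeasurableSpace.comap X inferInstance]) ω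
        * (μ[Y₁ | MeasurableSpace.comap X inferInstance]) ω := by
  have hY₁m : AEMeasurable Y₁ μ := hY₁.aestronglyMeasurable.aemeasurable
  have hY₀m : AEMeasurable Y₀ μ := hY₀.aestronglyMeasurable.aemeasurable
  set P' : Ω → ℝ × ℝ := fun ω => (hY₁m.mk Y₁ ω, hY₀m.mk Y₀ ω) with hP'def
  have hP' : Measurable P' := hY₁m.measurable_mk.prodMk hY₀m.measurable_mk
  have hPP' : (fun ω => (Y₁ ω, Y₀ ω)) =ᵐ[μ] P' := by
    filter_upwards [hY₁m.ae_eq_mk, hY₀m.ae_eq_mk] with ω h1 h2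
    simp [hP'def, Prod.ext_iff, h1, h2]
  have hfst : Y₁ =ᵐ[μ] fun ω => (P' ω).1 := hY₁m.ae_eq_mk
  have hY₁m₂ : StronglyMeasurable[MeasurableSpace.comap P' inferInstance]
      fun ω => (P' ω).1 :=
    (Measurable.comp measurable_fst (comap_measurable P')).stronglyMeasurable
  have hgen : ∀ A : Set Ω, MeasurableSet[MeasurableSpace.comap P' inferInstance] A →
      ∃ B : Set (ℝ × ℝ), MeasurableSet B ∧ P' ⁻¹' B = A := fun A hA => hA
  have hfact := fun (B : Set (ℝ × ℝ)) (hB : MeasurableSet B) =>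
    aux_kernel_fact hX.comap_le μ T hT (fun ω => (Y₁ ω, Y₀ ω)) P' hP' hPP' h_unconf B hB
  have key := aux_main μ hX.comap_le hP'.comap_le T hT hT_bin Y₁
    (hY₁.integrable one_le_two) P' hP' hfst hY₁m₂ hgen hfact
  have hfun : (fun ω => Y ω * T ω) = fun ω => T ω * Y₁ ω := by
    funext ω
    rw [hY]
    rcases hT_bin ω with h | h <;> simp [h]
  rw [hfun]
  exact key
end

section
/- Let (Ω, 𝓕, μ) be a standard Borel probability space, X : Ω → 𝒳 measurable, T : Ω → {0, 1} ⊆ ℝ measurable (binary), and Y₁, Y₀ : Ω → ℝ square-integrable. Define the observed outcome Y = T·Y₁ + (1 − T)·Y₀. Assume unconfoundedness: (Y₁, Y₀) is conditionally independent of T given σ(X). Then μ[Y·(1 − T) | σ(X)] = (1 − μ[T | σ(X)]) · μ[Y₀ | σ(X)] μ-almost everywhere. -/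
open MeasureTheory ProbabilityTheory

section Aux

variable {Ω : Type*} {m' mΩ : MeasurableSpace Ω}

/-- The conditional expectation of an indicator is bounded by `1` in norm. -/
lemma aux_hg_bound (hm' : m' ≤ mΩ)
    (μ : Measure Ω) [IsProbabilityMeasure μ] {B : Set Ω} (hB : MeasurableSet B) :
    ∀ᵐ x ∂μ, ‖(μ⟦B | m'⟧) x‖ ≤ 1 := by
  have h0 : 0 ≤ᵐ[μ] μ⟦B | m'⟧ :=
    condExp_nonneg (ae_of_all _ fun x => Set.indicator_nonneg (fun _ _ => zero_le_one) x)
  have h1 : μ⟦B | m'⟧ ≤ᵐ[μ] μ[(fun _ => (1:ℝ)) | m'] :=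
    condExp_mono ((integrable_const (1:ℝ)).indicator hB) (integrable_const 1)
      (ae_of_all _ fun x => Set.indicator_le_self' (fun _ _ => zero_le_one) x)
  filter_upwards [h0, h1] with x hx0 hx1
  simp only [Pi.zero_apply] at hx0
  rw [condExp_const hm'] at hx1
  rw [Real.norm_eq_abs, abs_le]
  exact ⟨by linarith, hx1⟩

/-- If the sets generated by `f` are conditionally independent of `B` given `m'` (expressed via
conditional expectations of indicators), then conditioning on the larger σ-algebra
`m' ⊔ σ(f)` gives the same conditional probability of `B` as conditioning on `m'`. -/
lemma aux_condexp_indicator_sup (hm' : m' ≤ mΩ)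
    (μ : Measure Ω) [IsProbabilityMeasure μ] {f : Ω → ℝ} (hf : Measurable f)
    {B : Set Ω} (hB : MeasurableSet B)
    (h_indep : ∀ s : Set ℝ, MeasurableSet s →
      (μ⟦f ⁻¹' s ∩ B | m'⟧) =ᵐ[μ] fun ω => (μ⟦f ⁻¹' s | m'⟧) ω * (μ⟦B | m'⟧) ω) :
    μ⟦B | m' ⊔ MeasurableSpace.comap f inferInstance⟧ =ᵐ[μ] μ⟦B | m'⟧ := by
  have hcle : MeasurableSpace.comap f inferInstance ≤ mΩ := hf.comap_le
  have hm'' : m' ⊔ MeasurableSpace.comap f inferInstance ≤ mΩ := sup_le hm' hcle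
  set g : Ω → ℝ := μ⟦B | m'⟧ with hgdef
  have hg_int : Integrable g μ := integrable_condExp
  have h1B_int : Integrable (B.indicator fun _ => (1:ℝ)) μ := (integrable_const (1:ℝ)).indicator hB
  have hg_bound : ∀ᵐ x ∂μ, ‖g x‖ ≤ 1 := aux_hg_bound hm' μ hB
  set p : Set (Set Ω) :=
    {u | ∃ s t, MeasurableSet[m'] s ∧
      MeasurableSet[MeasurableSpace.comap f inferInstance] t ∧ u = s ∩ t} with hp
  have h_eq : m' ⊔ MeasurableSpace.comap f inferInstance = MeasurableSpace.generateFrom p := by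
    refine le_antisymm (sup_le ?_ ?_) (MeasurableSpace.generateFrom_le ?_)
    · intro s hs
      exact MeasurableSpace.measurableSet_generateFrom
        ⟨s, Set.univ, hs, MeasurableSet.univ, (Set.inter_univ s).symm⟩
    · intro t ht
      exact MeasurableSpace.measurableSet_generateFrom
        ⟨Set.univ, t, MeasurableSet.univ, ht, (Set.univ_inter t).symm⟩
    · rintro u ⟨s, t, hs, ht, rfl⟩
      exact ((le_sup_left : m' ≤ m' ⊔ MeasurableSpace.comap f inferInstance) s hs).inter
        ((le_sup_right : MeasurableSpace.comap f inferInstance ≤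
          m' ⊔ MeasurableSpace.comap f inferInstance) t ht)
  have h_pi : IsPiSystem p := by
    rintro u ⟨s₁, t₁, hs₁, ht₁, rfl⟩ v ⟨s₂, t₂, hs₂, ht₂, rfl⟩ -
    exact ⟨s₁ ∩ s₂, t₁ ∩ t₂, hs₁.inter hs₂, ht₁.inter ht₂, by
      rw [Set.inter_inter_inter_comm]⟩
  have h_univ : ∫ x, (B.indicator fun _ => (1:ℝ)) x ∂μ = ∫ x, g x ∂μ :=
    (integral_condExp hm').symm
  have key : ∀ u, MeasurableSet[m' ⊔ MeasurableSpace.comap f inferInstance] u →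
      ∫ x in u, (B.indicator fun _ => (1:ℝ)) x ∂μ = ∫ x in u, g x ∂μ := by
    refine MeasurableSpace.induction_on_inter (m := m' ⊔ MeasurableSpace.comap f inferInstance)
      (C := fun u _ => ∫ x in u, (B.indicator fun _ => (1:ℝ)) x ∂μ = ∫ x in u, g x ∂μ)
      h_eq h_pi ?_ ?_ ?_ ?_
    · simp
    · rintro u ⟨s, t, hs, ⟨A, hA, rfl⟩, rfl⟩
      have hsm : MeasurableSet s := hm' s hs
      have htm : MeasurableSet (f ⁻¹' A) := hf hA
      have hint_tB : Integrable ((f ⁻¹' A ∩ B).indicator fun _ => (1:ℝ)) μ :=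
        (integrable_const (1:ℝ)).indicator (htm.inter hB)
      have h1t_int : Integrable ((f ⁻¹' A).indicator fun _ => (1:ℝ)) μ :=
        (integrable_const (1:ℝ)).indicator htm
      have hg1t : Integrable (fun x => g x * (f ⁻¹' A).indicator (fun _ => (1:ℝ)) x) μ :=
        Integrable.bdd_mul h1t_int (stronglyMeasurable_condExp.mono hm').aestronglyMeasurable
          hg_bound
      have hLHS : ∫ x in s ∩ f ⁻¹' A, (B.indicator fun _ => (1:ℝ)) x ∂μ
          = ∫ x in s, (μ⟦f ⁻¹' A | m'⟧) x * g x ∂μ := by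
        rw [← setIntegral_indicator htm]
        calc ∫ x in s, (f ⁻¹' A).indicator (B.indicator fun _ => (1:ℝ)) x ∂μ
            = ∫ x in s, (f ⁻¹' A ∩ B).indicator (fun _ => (1:ℝ)) x ∂μ := by
              simp_rw [Set.indicator_indicator]
          _ = ∫ x in s, (μ⟦f ⁻¹' A ∩ B | m'⟧) x ∂μ := (setIntegral_condExp hm' hint_tB hs).symm
          _ = ∫ x in s, (μ⟦f ⁻¹' A | m'⟧) x * g x ∂μ :=
              integral_congr_ae (ae_restrict_of_ae (h_indep A hA))
      have hRHS : ∫ x in s ∩ f ⁻¹' A, g x ∂μ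
          = ∫ x in s, g x * (μ⟦f ⁻¹' A | m'⟧) x ∂μ := by
        rw [← setIntegral_indicator htm]
        calc ∫ x in s, (f ⁻¹' A).indicator g x ∂μ
            = ∫ x in s, g x * (f ⁻¹' A).indicator (fun _ => (1:ℝ)) x ∂μ := by
              refine integral_congr_ae (ae_of_all _ fun x => ?_)
              by_cases hx : x ∈ f ⁻¹' A <;> simp [hx]
          _ = ∫ x in s, (μ[fun x => g x * (f ⁻¹' A).indicator (fun _ => (1:ℝ)) x | m']) x ∂μ :=
              (setIntegral_condExp hm' hg1t hs).symm
          _ = ∫ x in s, g x * (μ⟦f ⁻¹' A | m'⟧) x ∂μ := by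
              refine integral_congr_ae (ae_restrict_of_ae ?_)
              exact condExp_mul_of_stronglyMeasurable_left stronglyMeasurable_condExp hg1t h1t_int
      rw [hLHS, hRHS]
      exact integral_congr_ae (ae_of_all _ fun x => mul_comm _ _)
    · intro u hu h
      have hum : MeasurableSet u := hm'' u hu
      have h₁ := integral_add_compl hum h1B_int
      have h₂ := integral_add_compl hum hg_int
      linarith
    · intro fs hdisj hmeas h
      have hms : ∀ i, MeasurableSet (fs i) := fun i => hm'' _ (hmeas i)
      rw [integral_iUnion hms hdisj h1B_int.integrableOn,
        integral_iUnion hms hdisj hg_int.integrableOn]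
      exact tsum_congr h
  refine (ae_eq_condExp_of_forall_setIntegral_eq hm'' h1B_int
    (fun s _ _ => hg_int.integrableOn) (fun s hs _ => (key s hs).symm) ?_).symm
  exact ((stronglyMeasurable_condExp (m := m')).mono
    (le_sup_left : m' ≤ m' ⊔ MeasurableSpace.comap f inferInstance)).aestronglyMeasurable

/-- Product formula: under the conditional independence hypothesis,
`μ[f · 1_B | m'] = μ[f | m'] · μ⟦B | m'⟧` a.e. -/
lemma aux_condexp_mul_indicator (hm' : m' ≤ mΩ)
    (μ : Measure Ω) [IsProbabilityMeasure μ] {f : Ω → ℝ} (hf : Measurable f)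
    (hf_int : Integrable f μ) {B : Set Ω} (hB : MeasurableSet B)
    (h_indep : ∀ s : Set ℝ, MeasurableSet s →
      (μ⟦f ⁻¹' s ∩ B | m'⟧) =ᵐ[μ] fun ω => (μ⟦f ⁻¹' s | m'⟧) ω * (μ⟦B | m'⟧) ω) :
    μ[fun ω => f ω * B.indicator (fun _ => (1:ℝ)) ω | m']
      =ᵐ[μ] fun ω => (μ[f | m']) ω * (μ⟦B | m'⟧) ω := by
  have hcle : MeasurableSpace.comap f inferInstance ≤ mΩ := hf.comap_le
  have hm'' : m' ⊔ MeasurableSpace.comap f inferInstance ≤ mΩ := sup_le hm' hcle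
  have hfmc : Measurable[MeasurableSpace.comap f inferInstance] f := fun s hs => ⟨s, hs, rfl⟩
  have hfm'' : StronglyMeasurable[m' ⊔ MeasurableSpace.comap f inferInstance] f :=
    (hfmc.mono (le_sup_right (a := m') (b := MeasurableSpace.comap f inferInstance))
      le_rfl).stronglyMeasurable
  have h1B_int : Integrable (B.indicator fun _ => (1:ℝ)) μ := (integrable_const (1:ℝ)).indicator hB
  have hg_bound : ∀ᵐ x ∂μ, ‖(μ⟦B | m'⟧) x‖ ≤ 1 := aux_hg_bound hm' μ hB
  have hfB_int : Integrable (fun ω => f ω * B.indicator (fun _ => (1:ℝ)) ω) μ := by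
    have h : (fun ω => f ω * B.indicator (fun _ => (1:ℝ)) ω) = B.indicator f := by
      funext x; by_cases hx : x ∈ B <;> simp [hx]
    rw [h]; exact hf_int.indicator hB
  have hgf_int : Integrable (fun ω => (μ⟦B | m'⟧) ω * f ω) μ :=
    Integrable.bdd_mul hf_int (stronglyMeasurable_condExp.mono hm').aestronglyMeasurable hg_bound
  have step1 : μ[fun ω => f ω * B.indicator (fun _ => (1:ℝ)) ω | m']
      =ᵐ[μ] μ[μ[fun ω => f ω * B.indicator (fun _ => (1:ℝ)) ω
        | m' ⊔ MeasurableSpace.comap f inferInstance] | m'] :=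
    (condExp_condExp_of_le le_sup_left hm'').symm
  have step2 : μ[fun ω => f ω * B.indicator (fun _ => (1:ℝ)) ω
        | m' ⊔ MeasurableSpace.comap f inferInstance]
      =ᵐ[μ] fun ω => f ω * (μ⟦B | m'⟧) ω := by
    have h := condExp_mul_of_stronglyMeasurable_left (μ := μ) hfm'' hfB_int h1B_int
    refine h.trans ?_
    filter_upwards [aux_condexp_indicator_sup hm' μ hf hB h_indep] with ω hω
    simp only [Pi.mul_apply]
    rw [hω]
  have step3 : μ[fun ω => f ω * (μ⟦B | m'⟧) ω | m']
      =ᵐ[μ] fun ω => (μ[f | m']) ω * (μ⟦B | m'⟧) ω := by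
    have hcomm : (fun ω => f ω * (μ⟦B | m'⟧) ω) = fun ω => (μ⟦B | m'⟧) ω * f ω := by
      funext ω; exact mul_comm _ _
    rw [hcomm]
    have h := condExp_mul_of_stronglyMeasurable_left (μ := μ) (stronglyMeasurable_condExp (m := m'))
      hgf_int hf_int
    refine h.trans (ae_of_all _ fun ω => ?_)
    exact mul_comm _ _
  exact step1.trans ((condExp_congr_ae step2).trans step3)

/-- Conditional independence is stable under a.e. modification of one of the functions. -/
lemma aux_condIndepFun_ae_eq_left [StandardBorelSpace Ω] (hm' : m' ≤ mΩ)
    {μ : Measure Ω} [IsProbabilityMeasure μ] {f f' g : Ω → ℝ}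
    (hfg : CondIndepFun m' hm' f g μ) (hff' : f =ᵐ[μ] f') :
    CondIndepFun m' hm' f' g μ := by
  have key : ∀ᵐ a ∂(μ.trim hm'), f =ᵐ[condExpKernel (mΩ := mΩ) μ m' a] f' := ?_
  · exact Kernel.IndepFun.congr' hfg key (Filter.Eventually.of_forall fun a => .rfl)
  set N := toMeasurable μ {x | f x ≠ f' x} with hNdef
  have hN : MeasurableSet N := measurableSet_toMeasurable _ _
  have hμN : μ N = 0 := by
    rw [hNdef, measure_toMeasurable]
    exact ae_iff.mp hff'
  have hcond : μ⟦N | m'⟧ =ᵐ[μ] fun _ => (0:ℝ) := by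
    have h0 : (N.indicator fun _ => (1:ℝ)) =ᵐ[μ] (fun _ => (0:ℝ)) := by
      filter_upwards [measure_eq_zero_iff_ae_notMem.mp hμN] with x hx
      simp [Set.indicator_of_notMem hx]
    calc μ⟦N | m'⟧ =ᵐ[μ] μ[fun _ => (0:ℝ) | m'] := condExp_congr_ae h0
      _ = fun _ => (0:ℝ) := condExp_const hm' 0
  have htrim : ∀ᵐ a ∂(μ.trim hm'), (condExpKernel μ m' a N).toReal = 0 := by
    have h2 := condExpKernel_ae_eq_trim_condExp (μ := μ) hm' hN
    have h3 : (μ⟦N | m'⟧) =ᵐ[μ.trim hm'] (fun _ => (0:ℝ)) := by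
      rw [StronglyMeasurable.ae_eq_trim_iff hm' stronglyMeasurable_condExp stronglyMeasurable_const]
      exact hcond
    filter_upwards [h2.trans h3] with a ha using ha
  filter_upwards [htrim] with a ha
  have hfin : condExpKernel μ m' a N ≠ ⊤ := measure_ne_top _ _
  have hzero : condExpKernel μ m' a N = 0 := by
    rcases ENNReal.toReal_eq_zero_iff _ |>.mp ha with h | h
    · exact h
    · exact absurd h hfin
  exact ae_iff.mpr (measure_mono_null (subset_toMeasurable _ _) hzero)

end Aux

/-- Under unconfoundedness, the control-group regression function is identified from the
observed outcome `Y = T·Y₁ + (1 - T)·Y₀`: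
`μ[Y·(1 - T) | σ(X)] = (1 - μ[T | σ(X)]) · μ[Y₀ | σ(X)]` a.e. -/
theorem condexp_obs_mul_one_sub_treatment_eq
    {Ω 𝒳 : Type*} {mΩ : MeasurableSpace Ω} [StandardBorelSpace Ω] [MeasurableSpace 𝒳]
    (μ : Measure Ω) [IsProbabilityMeasure μ]
    (X : Ω → 𝒳) (hX : Measurable X)
    (T : Ω → ℝ) (hT : Measurable T) (hT_bin : ∀ ω, T ω = 0 ∨ T ω = 1)
    (Y₁ Y₀ : Ω → ℝ) (hY₁ : MemLp Y₁ 2 μ) (hY₀ : MemLp Y₀ 2 μ)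
    (Y : Ω → ℝ) (hY : Y = fun ω => T ω * Y₁ ω + (1 - T ω) * Y₀ ω)
    (h_unconf : CondIndepFun (MeasurableSpace.comap X inferInstance) hX.comap_le
      (fun ω => (Y₁ ω, Y₀ ω)) T μ) :
    μ[fun ω => Y ω * (1 - T ω) | MeasurableSpace.comap X inferInstance]
      =ᵐ[μ] fun ω => (1 - (μ[T | MeasurableSpace.comap X inferInstance]) ω)
        * (μ[Y₀ | MeasurableSpace.comap X inferInstance]) ω := by
  have hm' : MeasurableSpace.comap X inferInstance ≤ mΩ := hX.comap_le
  set B : Set Ω := T ⁻¹' {0} with hBdef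
  have hB : MeasurableSet B := hT (measurableSet_singleton 0)
  -- measurable representative of Y₀
  set Y₀' : Ω → ℝ := hY₀.aestronglyMeasurable.mk Y₀ with hY₀'def
  have hY₀'m : Measurable Y₀' := hY₀.aestronglyMeasurable.stronglyMeasurable_mk.measurable
  have hae : Y₀ =ᵐ[μ] Y₀' := hY₀.aestronglyMeasurable.ae_eq_mk
  have hY₀_int : Integrable Y₀ μ := hY₀.integrable one_le_two
  have hY₀'_int : Integrable Y₀' μ := hY₀_int.congr hae
  have hT_int : Integrable T μ := by
    refine Integrable.mono' (integrable_const (1:ℝ)) hT.aestronglyMeasurable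
      (ae_of_all _ fun ω => ?_)
    rcases hT_bin ω with h | h <;> simp [h]
  -- conditional independence of Y₀' and T
  have hCI0 : CondIndepFun (MeasurableSpace.comap X inferInstance) hX.comap_le Y₀ T μ :=
    h_unconf.comp measurable_snd measurable_id
  have hCI : CondIndepFun (MeasurableSpace.comap X inferInstance) hX.comap_le Y₀' T μ :=
    aux_condIndepFun_ae_eq_left hm' hCI0 hae
  have h_indep : ∀ s : Set ℝ, MeasurableSet s →
      (μ⟦Y₀' ⁻¹' s ∩ B | MeasurableSpace.comap X inferInstance⟧) =ᵐ[μ]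
        fun ω => (μ⟦Y₀' ⁻¹' s | MeasurableSpace.comap X inferInstance⟧) ω
          * (μ⟦B | MeasurableSpace.comap X inferInstance⟧) ω := fun s hs =>
    (condIndepFun_iff_condExp_inter_preimage_eq_mul hY₀'m hT).mp hCI s {0} hs
      (measurableSet_singleton 0)
  have hmain := aux_condexp_mul_indicator hm' μ hY₀'m hY₀'_int hB h_indep
  -- the observed LHS integrand equals `Y₀' · 1_B` a.e.
  have hLHS : μ[fun ω => Y ω * (1 - T ω) | MeasurableSpace.comap X inferInstance]
      =ᵐ[μ] μ[fun ω => Y₀' ω * B.indicator (fun _ => (1:ℝ)) ω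
        | MeasurableSpace.comap X inferInstance] := by
    refine condExp_congr_ae ?_
    filter_upwards [hae] with ω hω
    rcases hT_bin ω with h | h
    · have hmem : ω ∈ B := by simp [hBdef, h]
      simp [hY, h, Set.indicator_of_mem hmem, hω]
    · have hmem : ω ∉ B := by simp [hBdef, h]
      simp [hY, h, Set.indicator_of_notMem hmem]
  -- conditional probability of `B` equals `1 - μ[T|σ(X)]`
  have hBcond : (μ⟦B | MeasurableSpace.comap X inferInstance⟧)
      =ᵐ[μ] fun ω => 1 - (μ[T | MeasurableSpace.comap X inferInstance]) ω := by
    have hfun : B.indicator (fun _ => (1:ℝ)) = (fun _ => (1:ℝ)) - T := by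
      funext ω
      rcases hT_bin ω with h | h
      · have hmem : ω ∈ B := by simp [hBdef, h]
        simp [Set.indicator_of_mem hmem, h]
      · have hmem : ω ∉ B := by simp [hBdef, h]
        simp [Set.indicator_of_notMem hmem, h]
    calc μ⟦B | MeasurableSpace.comap X inferInstance⟧
        = μ[(fun _ => (1:ℝ)) - T | MeasurableSpace.comap X inferInstance] := by rw [hfun]
      _ =ᵐ[μ] μ[fun _ => (1:ℝ) | MeasurableSpace.comap X inferInstance]
          - μ[T | MeasurableSpace.comap X inferInstance] :=
            condExp_sub (integrable_const 1) hT_int _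
      _ =ᵐ[μ] fun ω => 1 - (μ[T | MeasurableSpace.comap X inferInstance]) ω := by
          rw [condExp_const hm']
          exact ae_of_all _ fun ω => rfl
  have hY₀cond : μ[Y₀ | MeasurableSpace.comap X inferInstance]
      =ᵐ[μ] μ[Y₀' | MeasurableSpace.comap X inferInstance] := condExp_congr_ae hae
  refine (hLHS.trans hmain).trans ?_
  filter_upwards [hBcond, hY₀cond] with ω h₁ h₂
  rw [h₁, h₂.symm, mul_comm]
end

section
/- Let (Ω, 𝓕, μ) be a standard Borel probability space, X : Ω → 𝒳 measurable, T : Ω → {0, 1} ⊆ ℝ measurable (binary), and Y₁, Y₀ : Ω → ℝ square-integrable. Define the observed outcome Y = T·Y₁ + (1 − T)·Y₀ and the propensity function e = μ[T | σ(X)]. Assume unconfoundedness ((Y₁, Y₀) conditionally independent of T given σ(X)) and overlap (0 < e < 1 μ-almost everywhere). Then μ-almost everywhere, the CATE is identified from observed data: μ[Y₁ − Y₀ | σ(X)] = μ[Y·T | σ(X)] / e − μ[Y·(1 − T) | σ(X)] / (1 − e). -/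
open MeasureTheory ProbabilityTheory Filter

lemma ae_ae_condexpKernel_eq {Ω γ : Type*} {m' : MeasurableSpace Ω} {mΩ : MeasurableSpace Ω} [StandardBorelSpace Ω]
    {μ : Measure Ω} [IsFiniteMeasure μ] (hm' : m' ≤ mΩ)
    {f f' : Ω → γ} (h : f =ᵐ[μ] f') :
    ∀ᵐ ω ∂(μ.trim hm'), f =ᵐ[condExpKernel μ m' ω] f' := by
  have hnull : μ {x | ¬ f x = f' x} = 0 := ae_iff.mp h
  obtain ⟨N, hNsub, hNmeas, hNnull⟩ := exists_measurable_superset_of_null hnull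
  -- a.e. the kernel gives measure zero to N
  have h1 := condExpKernel_ae_eq_condExp (μ := μ) hm' hNmeas
  have h2 : (μ⟦N | m'⟧) =ᵐ[μ] 0 := by
    have hind : N.indicator (fun _ => (1:ℝ)) =ᵐ[μ] 0 := by
      have : ∀ᵐ x ∂μ, x ∉ N := by
        rw [ae_iff]; simpa using hNnull
      filter_upwards [this] with x hx
      simp [Set.indicator_of_notMem hx]
    exact (condExp_congr_ae hind).trans (by rw [condExp_zero])
  have h3 : ∀ᵐ ω ∂μ, condExpKernel μ m' ω N = 0 := by
    filter_upwards [h1.trans h2] with ω hω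
    have hfin : condExpKernel μ m' ω N ≠ ⊤ := measure_ne_top _ _
    simpa [measureReal_def, ENNReal.toReal_eq_zero_iff, hfin] using hω
  -- transfer to the trimmed measure using measurability of the kernel
  have hmeas : Measurable[m'] (fun ω => condExpKernel μ m' ω N) := by
    exact Kernel.measurable_coe (condExpKernel μ m') hNmeas
  have hS : MeasurableSet[m'] {ω | condExpKernel μ m' ω N = 0} :=
    hmeas (measurableSet_singleton 0)
  have h4 : ∀ᵐ ω ∂(μ.trim hm'), condExpKernel μ m' ω N = 0 := by
    rw [ae_iff]
    have hset : {a | ¬ ((condExpKernel μ m') a) N = 0}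
        = {ω | ((condExpKernel μ m') ω) N = 0}ᶜ := rfl
    rw [hset, trim_measurableSet_eq (μ := μ) hm' hS.compl]
    simpa [Set.compl_setOf] using (ae_iff.mp h3)
  filter_upwards [h4] with ω hω
  rw [Filter.eventuallyEq_iff_exists_mem]
  refine ⟨{x | f x = f' x}, ?_, fun x hx => hx⟩
  rw [mem_ae_iff]
  exact measure_mono_null (fun x hx => hNsub hx) hω

lemma condexp_indicator_mul_of_condIndepFun
    {Ω : Type*} {m' : MeasurableSpace Ω} {mΩ : MeasurableSpace Ω} [StandardBorelSpace Ω]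
    (μ : Measure Ω) [IsProbabilityMeasure μ] (hm' : m' ≤ mΩ)
    {f g : Ω → ℝ} (hfm : Measurable f) (hfi : Integrable f μ) (hg : Measurable g)
    (hind : CondIndepFun m' hm' f g μ) {t : Set ℝ} (ht : MeasurableSet t) :
    μ[(g ⁻¹' t).indicator f | m']
      =ᵐ[μ] fun ω => (μ[f | m']) ω * (μ⟦g ⁻¹' t | m'⟧) ω := by
  set A := g ⁻¹' t with hA_def
  have hA : MeasurableSet A := hg ht
  set kA := μ⟦A | m'⟧ with hkA_def
  -- conditional independence applied to sets
  have key : ∀ B : Set Ω, MeasurableSet[MeasurableSpace.comap f inferInstance] B →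
      (μ⟦B ∩ A | m'⟧) =ᵐ[μ] fun ω => (μ⟦B | m'⟧) ω * kA ω := by
    intro B hB
    have h := (condIndepFun_iff (m' := m') (hm' := hm') f g hfm hg μ).mp hind B A hB ⟨t, ht, rfl⟩
    filter_upwards [h] with ω hω
    simpa using hω
  have hmf : MeasurableSpace.comap f inferInstance ≤ mΩ := hfm.comap_le
  set ν := μ.trim hmf with hν_def
  -- bounds on kA
  have hkA_nonneg : 0 ≤ᵐ[μ] kA :=
    condExp_nonneg (Eventually.of_forall fun ω =>
      Set.indicator_nonneg (fun _ _ => zero_le_one) ω)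
  have hkA_le_one : kA ≤ᵐ[μ] fun _ => (1 : ℝ) := by
    have h := condExp_mono (μ := μ) (m := m')
      ((integrable_const (1:ℝ)).indicator hA) (integrable_const (1:ℝ))
      (Eventually.of_forall fun ω => Set.indicator_le_self' (fun _ _ => zero_le_one) ω)
    rwa [condExp_const hm' (1:ℝ)] at h
  have hkA_abs : ∀ᵐ ω ∂μ, ‖kA ω‖ ≤ 1 := by
    filter_upwards [hkA_nonneg, hkA_le_one] with ω h0 h1
    rw [Real.norm_eq_abs, abs_of_nonneg h0]
    exact h1
  have hkA_meas : AEStronglyMeasurable kA μ :=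
    (stronglyMeasurable_condExp.mono hm').aestronglyMeasurable
  -- integrability of products with kA
  have hprod : ∀ {φ : Ω → ℝ}, Integrable φ μ →
      Integrable (fun ω => (μ[φ | m']) ω * kA ω) μ := by
    intro φ hφ
    have := Integrable.bdd_mul (c := 1) (integrable_condExp (f := φ) (m := m'))
      hkA_meas hkA_abs
    exact this.congr (Eventually.of_forall fun ω => mul_comm _ _)
  -- main step : the defining property of the conditional expectation, proved by induction
  -- on integrable functions (w.r.t. the trimmed measure on σ(f)).
  have hP : ∀ φ : Ω → ℝ,
      @Integrable ℝ _ _ Ω (MeasurableSpace.comap f inferInstance) φ ν → ∀ s, MeasurableSet[m'] s →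
      ∫ ω in s, A.indicator φ ω ∂μ = ∫ ω in s, (μ[φ | m']) ω * kA ω ∂μ := by
    refine fun φ₀ hφ₀ => @Integrable.induction Ω ℝ
      (MeasurableSpace.comap f inferInstance) _ ν
      (fun φ => ∀ s, MeasurableSet[m'] s →
        ∫ ω in s, A.indicator φ ω ∂μ = ∫ ω in s, (μ[φ | m']) ω * kA ω ∂μ)
      ?_ ?_ ?_ ?_ φ₀ hφ₀
    · -- indicator case
      intro c B hB _ s hs
      have hBΩ : MeasurableSet B := hmf _ hB
      have hsΩ : MeasurableSet s := hm' _ hs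
      have hiBA : Integrable ((B ∩ A).indicator fun _ => (1:ℝ)) μ :=
        (integrable_const (1:ℝ)).indicator (hBΩ.inter hA)
      have e1 : A.indicator (B.indicator fun _ => c) = (A ∩ B).indicator fun _ => c :=
        Set.indicator_indicator A B fun _ => c
      have e2 : B.indicator (fun _ => c) = c • (B.indicator fun _ => (1:ℝ)) := by
        funext ω
        by_cases hω : ω ∈ B <;> simp [hω]
      have hLHS : ∫ ω in s, A.indicator (B.indicator fun _ => c) ω ∂μ
          = (μ (A ∩ B ∩ s)).toReal * c := by
        rw [e1, integral_indicator (hA.inter hBΩ), Measure.restrict_restrict (hA.inter hBΩ),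
          setIntegral_const, smul_eq_mul, measureReal_def]
      rw [hLHS]
      symm
      have hsmul : μ[B.indicator (fun _ => c) | m']
          =ᵐ[μ] fun ω => c * (μ⟦B | m'⟧) ω := by
        rw [e2]
        filter_upwards [condExp_smul (μ := μ) (m := m') c (B.indicator fun _ => (1:ℝ))]
          with ω hω
        simpa using hω
      calc ∫ ω in s, (μ[B.indicator (fun _ => c) | m']) ω * kA ω ∂μ
          = ∫ ω in s, c * ((μ⟦B | m'⟧) ω * kA ω) ∂μ := by
            refine setIntegral_congr_ae hsΩ ?_
            filter_upwards [hsmul] with ω hω _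
            rw [hω, mul_assoc]
        _ = c * ∫ ω in s, (μ⟦B | m'⟧) ω * kA ω ∂μ := integral_const_mul _ _
        _ = c * ∫ ω in s, (μ⟦B ∩ A | m'⟧) ω ∂μ := by
            congr 1
            refine setIntegral_congr_ae hsΩ ?_
            filter_upwards [key B hB] with ω hω _
            rw [hω]
        _ = c * ∫ ω in s, (B ∩ A).indicator (fun _ => (1:ℝ)) ω ∂μ := by
            rw [setIntegral_condExp hm' hiBA hs]
        _ = (μ (A ∩ B ∩ s)).toReal * c := by
            rw [integral_indicator (hBΩ.inter hA), Measure.restrict_restrict (hBΩ.inter hA),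
              setIntegral_const, smul_eq_mul, Set.inter_comm B A, measureReal_def]
            ring
    · -- additivity
      intro φ ψ _ hφν hψν hPφ hPψ s hs
      have hφ : Integrable φ μ := integrable_of_integrable_trim hmf hφν
      have hψ : Integrable ψ μ := integrable_of_integrable_trim hmf hψν
      have hsΩ : MeasurableSet s := hm' _ hs
      have e1 : A.indicator (φ + ψ) = A.indicator φ + A.indicator ψ :=
        Set.indicator_add A φ ψ
      have hadd := condExp_add (μ := μ) (m := m') hφ hψ
      calc ∫ ω in s, A.indicator (φ + ψ) ω ∂μ
          = ∫ ω in s, (A.indicator φ ω + A.indicator ψ ω) ∂μ := by rw [e1]; rfl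
        _ = ∫ ω in s, A.indicator φ ω ∂μ + ∫ ω in s, A.indicator ψ ω ∂μ :=
            integral_add (hφ.indicator hA).integrableOn (hψ.indicator hA).integrableOn
        _ = ∫ ω in s, (μ[φ | m']) ω * kA ω ∂μ + ∫ ω in s, (μ[ψ | m']) ω * kA ω ∂μ := by
            rw [hPφ s hs, hPψ s hs]
        _ = ∫ ω in s, ((μ[φ | m']) ω * kA ω + (μ[ψ | m']) ω * kA ω) ∂μ :=
            (integral_add (hprod hφ).integrableOn (hprod hψ).integrableOn).symm
        _ = ∫ ω in s, (μ[φ + ψ | m']) ω * kA ω ∂μ := by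
            refine setIntegral_congr_ae hsΩ ?_
            filter_upwards [hadd] with ω hω _
            rw [hω]
            simp [add_mul]
    · -- closedness in L¹(ν)
      have hmemeq : {φL : Ω →₁[ν] ℝ | ∀ s, MeasurableSet[m'] s →
          ∫ ω in s, A.indicator (⇑φL) ω ∂μ = ∫ ω in s, (μ[⇑φL | m']) ω * kA ω ∂μ}
          = ⋂ (s : Set Ω) (_ : MeasurableSet[m'] s),
            {φL : Ω →₁[ν] ℝ |
              ∫ ω in s, A.indicator (⇑φL) ω ∂μ = ∫ ω in s, (μ[⇑φL | m']) ω * kA ω ∂μ} := by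
        ext φL
        simp [Set.mem_iInter]
      rw [hmemeq]
      have hint : ∀ φL : Ω →₁[ν] ℝ, Integrable (⇑φL) μ := fun φL =>
        integrable_of_integrable_trim hmf (L1.integrable_coeFn φL)
      have hdist : ∀ φL ψL : Ω →₁[ν] ℝ,
          ∫ ω, ‖φL ω - ψL ω‖ ∂μ = dist φL ψL := by
        intro φL ψL
        have hmeasν : AEStronglyMeasurable[MeasurableSpace.comap f inferInstance] (fun ω => ‖φL ω - ψL ω‖) ν :=
          ((Lp.aestronglyMeasurable φL).sub (Lp.aestronglyMeasurable ψL)).norm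
        rw [integral_trim_ae hmf hmeasν, L1.dist_eq_integral_dist]
        exact integral_congr_ae (Eventually.of_forall fun ω => (dist_eq_norm _ _).symm)
      refine isClosed_iInter fun s => isClosed_iInter fun hs => isClosed_eq ?_ ?_
      · -- continuity of the first map
        refine (LipschitzWith.of_dist_le_mul (K := 1) fun φL ψL => ?_).continuous
        have hφ := hint φL
        have hψ := hint ψL
        rw [Real.dist_eq, NNReal.coe_one, one_mul]
        have e1 : ∫ ω in s, A.indicator (⇑φL) ω ∂μ - ∫ ω in s, A.indicator (⇑ψL) ω ∂μ
            = ∫ ω in s, A.indicator (⇑φL - ⇑ψL) ω ∂μ := by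
          rw [← integral_sub (hφ.indicator hA).integrableOn (hψ.indicator hA).integrableOn]
          refine setIntegral_congr_ae (hm' _ hs) ?_
          refine Eventually.of_forall fun ω _ => ?_
          by_cases hω : ω ∈ A <;> simp [hω]
        rw [e1]
        calc |∫ ω in s, A.indicator (⇑φL - ⇑ψL) ω ∂μ|
            ≤ ∫ ω in s, ‖A.indicator (⇑φL - ⇑ψL) ω‖ ∂μ := by
              rw [← Real.norm_eq_abs]
              exact norm_integral_le_integral_norm _
          _ ≤ ∫ ω in s, ‖φL ω - ψL ω‖ ∂μ := by
              refine integral_mono_of_nonneg (Eventually.of_forall fun ω => norm_nonneg _)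
                ((hφ.sub hψ).norm.integrableOn) ?_
              refine Eventually.of_forall fun ω => ?_
              exact (norm_indicator_le_norm_self _ ω)
          _ ≤ ∫ ω, ‖φL ω - ψL ω‖ ∂μ :=
              setIntegral_le_integral (hφ.sub hψ).norm
                (Eventually.of_forall fun ω => norm_nonneg _)
          _ = dist φL ψL := hdist φL ψL
      · -- continuity of the second map
        refine (LipschitzWith.of_dist_le_mul (K := 1) fun φL ψL => ?_).continuous
        have hφ := hint φL
        have hψ := hint ψL
        rw [Real.dist_eq, NNReal.coe_one, one_mul]
        have e1 : ∫ ω in s, (μ[⇑φL | m']) ω * kA ω ∂μ - ∫ ω in s, (μ[⇑ψL | m']) ω * kA ω ∂μ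
            = ∫ ω in s, (μ[⇑φL - ⇑ψL | m']) ω * kA ω ∂μ := by
          rw [← integral_sub (hprod hφ).integrableOn (hprod hψ).integrableOn]
          refine setIntegral_congr_ae (hm' _ hs) ?_
          filter_upwards [condExp_sub (μ := μ) (m := m') hφ hψ] with ω hω _
          rw [hω]
          simp [sub_mul]
        rw [e1]
        calc |∫ ω in s, (μ[⇑φL - ⇑ψL | m']) ω * kA ω ∂μ|
            ≤ ∫ ω in s, ‖(μ[⇑φL - ⇑ψL | m']) ω * kA ω‖ ∂μ := by
              rw [← Real.norm_eq_abs]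
              exact norm_integral_le_integral_norm _
          _ ≤ ∫ ω in s, |(μ[⇑φL - ⇑ψL | m']) ω| ∂μ := by
              refine integral_mono_ae (hprod (hφ.sub hψ)).norm.integrableOn
                integrable_condExp.abs.integrableOn ?_
              refine ae_restrict_of_ae ?_
              filter_upwards [hkA_abs] with ω hω
              rw [norm_mul]
              calc ‖(μ[⇑φL - ⇑ψL | m']) ω‖ * ‖kA ω‖
                    ≤ ‖(μ[⇑φL - ⇑ψL | m']) ω‖ * 1 :=
                      mul_le_mul_of_nonneg_left hω (norm_nonneg _)
                  _ = |(μ[⇑φL - ⇑ψL | m']) ω| := by rw [mul_one, Real.norm_eq_abs]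
          _ ≤ ∫ ω in s, |φL ω - ψL ω| ∂μ := setIntegral_abs_condExp_le hs _
          _ ≤ ∫ ω, |φL ω - ψL ω| ∂μ :=
              setIntegral_le_integral (hφ.sub hψ).abs
                (Eventually.of_forall fun ω => abs_nonneg _)
          _ = dist φL ψL := hdist φL ψL
    · -- stability under a.e. equality
      intro φ ψ haeν hφν hPφ s hs
      have hφψ : φ =ᵐ[μ] ψ := ae_eq_of_ae_eq_trim haeν
      have hsΩ : MeasurableSet s := hm' _ hs
      calc ∫ ω in s, A.indicator ψ ω ∂μ
          = ∫ ω in s, A.indicator φ ω ∂μ := by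
            refine setIntegral_congr_ae hsΩ ?_
            filter_upwards [hφψ] with ω hω _
            by_cases hωA : ω ∈ A <;> simp [hωA, hω]
        _ = ∫ ω in s, (μ[φ | m']) ω * kA ω ∂μ := hPφ s hs
        _ = ∫ ω in s, (μ[ψ | m']) ω * kA ω ∂μ := by
            refine setIntegral_congr_ae hsΩ ?_
            filter_upwards [condExp_congr_ae (m := m') hφψ] with ω hω _
            rw [hω]
  -- conclude via uniqueness of the conditional expectation
  have hfmeasmf : Measurable[MeasurableSpace.comap f inferInstance] f :=
    fun u hu => ⟨u, hu, rfl⟩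
  have hfν : Integrable f ν := hfi.trim hmf hfmeasmf.stronglyMeasurable
  have hPf := hP f hfν
  refine (ae_eq_condExp_of_forall_setIntegral_eq hm' (hfi.indicator hA)
    (fun s hs _ => (hprod hfi).integrableOn)
    (fun s hs _ => (hPf s hs).symm)
    ((stronglyMeasurable_condExp.mul stronglyMeasurable_condExp).aestronglyMeasurable)).symm

lemma cate_identification_aux
    {Ω : Type*} {m' : MeasurableSpace Ω} {mΩ : MeasurableSpace Ω} [StandardBorelSpace Ω]
    (μ : Measure Ω) [IsProbabilityMeasure μ] (hm' : m' ≤ mΩ)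
    (T : Ω → ℝ) (hT : Measurable T) (hT_bin : ∀ ω, T ω = 0 ∨ T ω = 1)
    (Y₁ Y₀ : Ω → ℝ) (hY₁ : MemLp Y₁ 2 μ) (hY₀ : MemLp Y₀ 2 μ)
    (Y : Ω → ℝ) (hY : Y = fun ω => T ω * Y₁ ω + (1 - T ω) * Y₀ ω)
    (e : Ω → ℝ) (he : e = μ[T | m'])
    (h_unconf : CondIndepFun m' hm' (fun ω => (Y₁ ω, Y₀ ω)) T μ)
    (h_overlap : ∀ᵐ ω ∂μ, 0 < e ω ∧ e ω < 1) :
    μ[fun ω => Y₁ ω - Y₀ ω | m']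
      =ᵐ[μ] fun ω =>
        (μ[fun ω' => Y ω' * T ω' | m']) ω / e ω
        - (μ[fun ω' => Y ω' * (1 - T ω') | m']) ω / (1 - e ω) := by
  -- measurable modifications of Y₁ and Y₀
  set Z₁ := hY₁.1.mk Y₁ with hZ₁_def
  set Z₀ := hY₀.1.mk Y₀ with hZ₀_def
  have hZ₁m : StronglyMeasurable Z₁ := hY₁.1.stronglyMeasurable_mk
  have hZ₀m : StronglyMeasurable Z₀ := hY₀.1.stronglyMeasurable_mk
  have hZ₁e : Y₁ =ᵐ[μ] Z₁ := hY₁.1.ae_eq_mk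
  have hZ₀e : Y₀ =ᵐ[μ] Z₀ := hY₀.1.ae_eq_mk
  have hZ₁i : Integrable Z₁ μ := (hY₁.integrable one_le_two).congr hZ₁e
  have hZ₀i : Integrable Z₀ μ := (hY₀.integrable one_le_two).congr hZ₀e
  -- transfer conditional independence to the modifications
  have hpair : (fun ω => (Y₁ ω, Y₀ ω)) =ᵐ[μ] (fun ω => (Z₁ ω, Z₀ ω)) := by
    filter_upwards [hZ₁e, hZ₀e] with ω h1 h0
    rw [h1, h0]
  have h_unconf' : CondIndepFun m' hm' (fun ω => (Z₁ ω, Z₀ ω)) T μ := by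
    refine Kernel.IndepFun.congr' h_unconf (ae_ae_condexpKernel_eq hm' hpair) ?_
    exact Filter.Eventually.of_forall fun _ => Filter.EventuallyEq.rfl
  have hind1 : CondIndepFun m' hm' Z₁ T μ :=
    h_unconf'.comp measurable_fst measurable_id
  have hind0 : CondIndepFun m' hm' Z₀ T μ :=
    h_unconf'.comp measurable_snd measurable_id
  -- the treatment set
  set A := T ⁻¹' {1} with hA_def
  have hA : MeasurableSet A := hT (measurableSet_singleton 1)
  have hmemA : ∀ ω, ω ∈ A ↔ T ω = 1 := fun ω => Iff.rfl
  have hTind : T = A.indicator (fun _ => (1:ℝ)) := by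
    funext ω
    rcases hT_bin ω with h | h
    · have hω : ω ∉ A := by simp [hA_def, Set.mem_preimage, h]
      simp [Set.indicator_of_notMem hω, h]
    · have hω : ω ∈ A := by simp [hA_def, Set.mem_preimage, h]
      simp [Set.indicator_of_mem hω, h]
  have h1mT : (fun ω => 1 - T ω) = Aᶜ.indicator (fun _ => (1:ℝ)) := by
    funext ω
    rcases hT_bin ω with h | h
    · have hω : ω ∉ A := by simp [hA_def, Set.mem_preimage, h]
      simp [Set.indicator_of_mem (Set.mem_compl hω), h]
    · have hω : ω ∈ A := by simp [hA_def, Set.mem_preimage, h]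
      simp [Set.indicator_of_notMem (by simpa using hω : ω ∉ Aᶜ), h]
  have hTint : Integrable T μ := by
    rw [hTind]
    exact (integrable_const 1).indicator hA
  -- pointwise identities for the observed outcome
  have hYT : (fun ω' => Y ω' * T ω') = A.indicator Y₁ := by
    funext ω
    rcases hT_bin ω with h | h
    · have hω : ω ∉ A := by simp [hA_def, Set.mem_preimage, h]
      simp [hY, Set.indicator_of_notMem hω, h]
    · have hω : ω ∈ A := by simp [hA_def, Set.mem_preimage, h]
      simp [hY, Set.indicator_of_mem hω, h]
  have hYT0 : (fun ω' => Y ω' * (1 - T ω')) = Aᶜ.indicator Y₀ := by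
    funext ω
    rcases hT_bin ω with h | h
    · have hω : ω ∉ A := by simp [hA_def, Set.mem_preimage, h]
      simp [hY, Set.indicator_of_mem (Set.mem_compl hω), h]
    · have hω : ω ∈ A := by simp [hA_def, Set.mem_preimage, h]
      simp [hY, Set.indicator_of_notMem (by simpa using hω : ω ∉ Aᶜ), h]
  -- identification of the propensity score
  have heA : (μ⟦A | m'⟧) = e := by
    rw [he, hTind]
  have heAc : (μ⟦Aᶜ | m'⟧) =ᵐ[μ] fun ω => 1 - e ω := by
    have h1 : (μ⟦Aᶜ | m'⟧) = μ[fun ω => 1 - T ω | m'] := by rw [h1mT]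
    rw [h1]
    have hsub := condExp_sub (μ := μ) (m := m') (integrable_const (1:ℝ)) hTint
    have hconst : μ[(fun _ => (1:ℝ)) | m'] = fun _ => (1:ℝ) := condExp_const hm' 1
    filter_upwards [hsub] with ω hω
    have : (fun ω => 1 - T ω) = (fun _ => (1:ℝ)) - T := rfl
    rw [this, hω, Pi.sub_apply, hconst, he]
  -- the two key factorizations
  have c1 : μ[(fun ω' => Y ω' * T ω') | m'] =ᵐ[μ] fun ω => (μ[Z₁ | m']) ω * e ω := by
    have h1 : μ[(fun ω' => Y ω' * T ω') | m'] = μ[A.indicator Y₁ | m'] := by rw [hYT]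
    have h2 : μ[A.indicator Y₁ | m'] =ᵐ[μ] μ[A.indicator Z₁ | m'] := by
      refine condExp_congr_ae ?_
      filter_upwards [hZ₁e] with ω hω
      by_cases hωA : ω ∈ A <;> simp [hωA, hω]
    have h3 := condexp_indicator_mul_of_condIndepFun μ hm' hZ₁m.measurable hZ₁i hT hind1
      (measurableSet_singleton (1:ℝ))
    rw [h1]
    refine (h2.trans h3).trans ?_
    rw [← hA_def, heA]
  have c0 : μ[(fun ω' => Y ω' * (1 - T ω')) | m']
      =ᵐ[μ] fun ω => (μ[Z₀ | m']) ω * (1 - e ω) := by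
    have h1 : μ[(fun ω' => Y ω' * (1 - T ω')) | m'] = μ[Aᶜ.indicator Y₀ | m'] := by rw [hYT0]
    have h2 : μ[Aᶜ.indicator Y₀ | m'] =ᵐ[μ] μ[Aᶜ.indicator Z₀ | m'] := by
      refine condExp_congr_ae ?_
      filter_upwards [hZ₀e] with ω hω
      by_cases hωA : ω ∈ Aᶜ <;> simp [hωA, hω]
    have h3 := condexp_indicator_mul_of_condIndepFun μ hm' hZ₀m.measurable hZ₀i hT hind0
      (measurableSet_singleton (1:ℝ)).compl
    rw [Set.preimage_compl, ← hA_def] at h3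
    rw [h1]
    refine (h2.trans h3).trans ?_
    filter_upwards [heAc] with ω hω
    rw [hω]
  -- the left-hand side
  have clhs : μ[(fun ω => Y₁ ω - Y₀ ω) | m']
      =ᵐ[μ] fun ω => (μ[Z₁ | m']) ω - (μ[Z₀ | m']) ω := by
    have h1 : (fun ω => Y₁ ω - Y₀ ω) =ᵐ[μ] (Z₁ - Z₀) := by
      filter_upwards [hZ₁e, hZ₀e] with ω ha hb
      simp [ha, hb]
    refine (condExp_congr_ae h1).trans ?_
    filter_upwards [condExp_sub (μ := μ) (m := m') hZ₁i hZ₀i] with ω hω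
    rw [hω, Pi.sub_apply]
  -- conclusion
  filter_upwards [c1, c0, clhs, h_overlap] with ω h1 h0 hL ⟨he0, he1⟩
  rw [hL, h1, h0]
  have hne0 : e ω ≠ 0 := ne_of_gt he0
  have hne1 : 1 - e ω ≠ 0 := sub_ne_zero.mpr (ne_of_lt he1).symm
  rw [mul_div_cancel_right₀ _ hne0, mul_div_cancel_right₀ _ hne1]

/-- Identifiability of the CATE from observational data under strong ignorability
(unconfoundedness and overlap):
`μ[Y₁ - Y₀ | σ(X)] = μ[Y·T | σ(X)] / e - μ[Y·(1 - T) | σ(X)] / (1 - e)` a.e.,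
where `e = μ[T | σ(X)]` is the propensity score and `Y = T·Y₁ + (1 - T)·Y₀`. -/
theorem cate_identification
    {Ω 𝒳 : Type*} {mΩ : MeasurableSpace Ω} [StandardBorelSpace Ω] [MeasurableSpace 𝒳]
    (μ : Measure Ω) [IsProbabilityMeasure μ]
    (X : Ω → 𝒳) (hX : Measurable X)
    (T : Ω → ℝ) (hT : Measurable T) (hT_bin : ∀ ω, T ω = 0 ∨ T ω = 1)
    (Y₁ Y₀ : Ω → ℝ) (hY₁ : MemLp Y₁ 2 μ) (hY₀ : MemLp Y₀ 2 μ)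
    (Y : Ω → ℝ) (hY : Y = fun ω => T ω * Y₁ ω + (1 - T ω) * Y₀ ω)
    (e : Ω → ℝ) (he : e = μ[T | MeasurableSpace.comap X inferInstance])
    (h_unconf : CondIndepFun (MeasurableSpace.comap X inferInstance) hX.comap_le
      (fun ω => (Y₁ ω, Y₀ ω)) T μ)
    (h_overlap : ∀ᵐ ω ∂μ, 0 < e ω ∧ e ω < 1) :
    μ[fun ω => Y₁ ω - Y₀ ω | MeasurableSpace.comap X inferInstance]
      =ᵐ[μ] fun ω =>
        (μ[fun ω' => Y ω' * T ω' | MeasurableSpace.comap X inferInstance]) ω / e ω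
        - (μ[fun ω' => Y ω' * (1 - T ω') | MeasurableSpace.comap X inferInstance]) ω
          / (1 - e ω) :=
  cate_identification_aux μ hX.comap_le T hT hT_bin Y₁ Y₀ hY₁ hY₀ Y hY e he h_unconf h_overlap
end

section
/- Let (Ω, 𝓕, μ) be a standard Borel probability space, X : Ω → 𝒳 measurable, T : Ω → ℝ measurable, and Y₁ : Ω → ℝ integrable. Assume Y₁ is conditionally independent of T given σ(X), and μ{T = 1} > 0. Let μ₁ = μ[· | {T = 1}] denote the conditional probability measure given the event {T = 1}. Then the conditional expectation of Y₁ given σ(X) computed under μ₁ equals the conditional expectation of Y₁ given σ(X) computed under μ, μ₁-almost everywhere: μ₁[Y₁ | σ(X)] = μ[Y₁ | σ(X)] μ₁-a.e. -/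
open MeasureTheory ProbabilityTheory

section Aux

universe u

variable {Ω : Type u}

/-- Pull-out property at the level of integrals. -/
lemma integral_mul_condexp_aux {m mΩ : MeasurableSpace Ω} {μ : Measure Ω} (hm : m ≤ mΩ)
    [IsProbabilityMeasure μ] {f h : Ω → ℝ}
    (hf : StronglyMeasurable[m] f) (hfh : Integrable (f * h) μ) (hh : Integrable h μ) :
    ∫ ω, f ω * h ω ∂μ = ∫ ω, f ω * (μ[h|m]) ω ∂μ := by
  have key : ∫ ω, (f * h) ω ∂μ = ∫ ω, (f * (μ[h|m])) ω ∂μ := by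
    rw [← integral_condExp hm (f := f * h)]
    exact integral_congr_ae (condExp_mul_of_stronglyMeasurable_left hf hfh hh)
  exact key

lemma _root_.MeasureTheory.Integrable.mul_bdd' {mΩ : MeasurableSpace Ω} {μ : Measure Ω} {F G : Ω → ℝ} {C : ℝ}
    (hF : Integrable F μ) (hG : AEStronglyMeasurable G μ) (h : ∀ᵐ ω ∂μ, ‖G ω‖ ≤ C) :
    Integrable (fun ω => F ω * G ω) μ := by
  simpa [mul_comm] using hF.bdd_mul hG h

lemma norm_indicator_one_le (u : Set Ω) (x : Ω) :
    ‖u.indicator (fun _ => (1 : ℝ)) x‖ ≤ 1 := by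
  by_cases h : x ∈ u <;> simp [h]

/-- Key lemma: under conditional independence of (measurable) `Y` and `T` given `m`,
the set integrals of `Y` and of `μ[Y|m]` agree on sets of the form `s ∩ T⁻¹' {1}`
with `s` measurable w.r.t. `m`. -/
lemma key_setIntegral {m mΩ : MeasurableSpace Ω} [StandardBorelSpace Ω] (hm : m ≤ mΩ)
    (μ : Measure Ω) [IsProbabilityMeasure μ] {Y T : Ω → ℝ} (hY : Measurable Y)
    (hYi : Integrable Y μ) (hT : Measurable T) (h_indep : CondIndepFun m hm Y T μ) {s : Set Ω}
    (hs : MeasurableSet[m] s) :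
    ∫ ω in s ∩ T ⁻¹' {1}, Y ω ∂μ = ∫ ω in s ∩ T ⁻¹' {1}, (μ[Y|m]) ω ∂μ := by
  set A : Set Ω := T ⁻¹' {1} with hA_def
  have hA : MeasurableSet A := hT (measurableSet_singleton 1)
  have hsm : MeasurableSet s := hm s hs
  set g : Ω → ℝ := μ[A.indicator (fun _ => (1 : ℝ))|m] with hg_def
  have hg_meas : StronglyMeasurable[m] g := stronglyMeasurable_condExp
  -- boundedness of g
  have hg0 : 0 ≤ᵐ[μ] g :=
    condExp_nonneg (Filter.Eventually.of_forall fun ω =>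
      Set.indicator_nonneg (fun _ _ => zero_le_one) ω)
  have hg1 : g ≤ᵐ[μ] fun _ => (1 : ℝ) := by
    have hmono := condExp_mono (μ := μ) (m := m)
      ((integrable_const (1 : ℝ)).indicator hA) (integrable_const (1 : ℝ))
      (Filter.Eventually.of_forall fun ω =>
        Set.indicator_le_self' (fun _ _ => zero_le_one) ω)
    rwa [condExp_const hm (1 : ℝ)] at hmono
  have hg_bdd : ∀ᵐ ω ∂μ, ‖g ω‖ ≤ 1 := by
    filter_upwards [hg0, hg1] with ω h0 h1
    have h0' : (0:ℝ) ≤ g ω := h0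
    rw [Real.norm_eq_abs, abs_le]
    exact ⟨by linarith, h1⟩
  -- the two "multipliers"
  set H₁ : Ω → ℝ := (s ∩ A).indicator (fun _ => (1 : ℝ)) with hH₁_def
  set H₂ : Ω → ℝ := fun ω => s.indicator (fun _ => (1 : ℝ)) ω * g ω with hH₂_def
  have hH₁i : Integrable H₁ μ := (integrable_const 1).indicator (hsm.inter hA)
  have hH₁_bdd : ∀ᵐ ω ∂μ, ‖H₁ ω‖ ≤ 1 :=
    Filter.Eventually.of_forall fun ω => norm_indicator_one_le _ ω
  have hH₂m : StronglyMeasurable[m] H₂ :=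
    (stronglyMeasurable_const.indicator hs).mul hg_meas
  have hH₂i : Integrable H₂ μ := by
    refine Integrable.bdd_mul (c := 1) integrable_condExp
      ((stronglyMeasurable_const.indicator hs).mono hm).aestronglyMeasurable ?_
    exact Filter.Eventually.of_forall fun ω => norm_indicator_one_le _ ω
  have hH₂_bdd : ∀ᵐ ω ∂μ, ‖H₂ ω‖ ≤ 1 := by
    filter_upwards [hg_bdd] with ω hω
    calc ‖H₂ ω‖ = ‖s.indicator (fun _ => (1 : ℝ)) ω‖ * ‖g ω‖ := norm_mul _ _
      _ ≤ 1 * 1 :=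
          mul_le_mul (norm_indicator_one_le _ ω) hω (norm_nonneg _) zero_le_one
      _ = 1 := one_mul 1
  -- σ-algebra generated by Y
  have hm₁ : MeasurableSpace.comap Y inferInstance ≤ mΩ := hY.comap_le
  have hYmeas : Measurable[MeasurableSpace.comap Y inferInstance] Y :=
    measurable_iff_comap_le.mpr le_rfl
  have hYm₁ : StronglyMeasurable[MeasurableSpace.comap Y inferInstance] Y :=
    hYmeas.stronglyMeasurable
  -- Lemma B : μ[H₂|m₁] = μ[H₁|m₁]
  have hB : μ[H₂|MeasurableSpace.comap Y inferInstance]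
      =ᵐ[μ] μ[H₁|MeasurableSpace.comap Y inferInstance] := by
    refine ae_eq_condExp_of_forall_setIntegral_eq hm₁ hH₁i
      (fun t _ _ => integrable_condExp.integrableOn) (fun t ht _ => ?_)
      (StronglyMeasurable.aestronglyMeasurable stronglyMeasurable_condExp)
    rw [setIntegral_condExp hm₁ hH₂i ht]
    -- now : ∫ x in t, H₂ x ∂μ = ∫ x in t, H₁ x ∂μ
    obtain ⟨B, hBm, rfl⟩ := ht
    have ht' : MeasurableSet (Y ⁻¹' B) := hY hBm
    set t : Set Ω := Y ⁻¹' B with ht_def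
    set It : Ω → ℝ := t.indicator (fun _ => (1 : ℝ)) with hIt_def
    have hIti : Integrable It μ := (integrable_const 1).indicator ht'
    -- RHS
    have hrhs : ∫ x in t, H₁ x ∂μ = (μ (t ∩ (s ∩ A))).toReal := by
      rw [hH₁_def, setIntegral_indicator (hsm.inter hA)]
      simp [Measure.restrict_apply (hsm.inter hA), Set.inter_comm, measureReal_def]
    -- LHS
    have hH₂It : Integrable (H₂ * It) μ :=
      (hIti.mul_bdd' ((hH₂m.mono hm).aestronglyMeasurable) hH₂_bdd).congr
        (Filter.Eventually.of_forall fun ω => mul_comm _ _)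
    have step1 : ∫ x in t, H₂ x ∂μ = ∫ x, H₂ x * It x ∂μ := by
      rw [← integral_indicator ht']
      refine integral_congr_ae (Filter.Eventually.of_forall fun x => ?_)
      by_cases hx : x ∈ t <;> simp [It, hx]
    have step2 : ∫ x, H₂ x * It x ∂μ = ∫ x, H₂ x * (μ[It|m]) x ∂μ :=
      integral_mul_condexp_aux hm hH₂m hH₂It hIti
    -- conditional independence
    have P2 : (μ⟦t ∩ A|m⟧) =ᵐ[μ] fun ω => (μ⟦t|m⟧) ω * (μ⟦A|m⟧) ω :=
      (condIndepFun_iff_condExp_inter_preimage_eq_mul hY hT).mp h_indep B {1} hBm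
        (measurableSet_singleton 1)
    have step3 : ∫ x, H₂ x * (μ[It|m]) x ∂μ = ∫ x, s.indicator (μ⟦t ∩ A|m⟧) x ∂μ := by
      refine integral_congr_ae ?_
      filter_upwards [P2] with x hx
      by_cases hxs : x ∈ s
      · simp only [Set.indicator_of_mem hxs, hx, H₂, It]
        ring
      · simp [Set.indicator_of_notMem hxs, H₂, hxs]
    have step4 : ∫ x, s.indicator (μ⟦t ∩ A|m⟧) x ∂μ = ∫ x in s, (μ⟦t ∩ A|m⟧) x ∂μ :=
      integral_indicator hsm
    have step5 : ∫ x in s, (μ⟦t ∩ A|m⟧) x ∂μ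
        = ∫ x in s, (t ∩ A).indicator (fun _ => (1 : ℝ)) x ∂μ :=
      setIntegral_condExp hm ((integrable_const 1).indicator (ht'.inter hA)) hs
    have step6 : ∫ x in s, (t ∩ A).indicator (fun _ => (1 : ℝ)) x ∂μ
        = (μ (s ∩ (t ∩ A))).toReal := by
      rw [setIntegral_indicator (ht'.inter hA)]
      simp [Measure.restrict_apply (ht'.inter hA), Set.inter_comm, measureReal_def]
    rw [step1, step2, step3, step4, step5, step6, hrhs, Set.inter_left_comm]
  -- main chain
  have hfYm : StronglyMeasurable[m] (μ[Y|m]) := stronglyMeasurable_condExp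
  have hfYi : Integrable (μ[Y|m]) μ := integrable_condExp
  have hmul_ind : ∀ (F : Ω → ℝ) x, F x * H₁ x = (s ∩ A).indicator F x := by
    intro F x
    by_cases hx : x ∈ s ∩ A <;> simp [H₁, hx]
  have e1 : ∫ ω in s ∩ A, Y ω ∂μ = ∫ ω, Y ω * H₁ ω ∂μ := by
    rw [← integral_indicator (hsm.inter hA)]
    exact (integral_congr_ae (Filter.Eventually.of_forall fun x => hmul_ind Y x)).symm
  have e5 : ∫ ω in s ∩ A, (μ[Y|m]) ω ∂μ = ∫ ω, (μ[Y|m]) ω * H₁ ω ∂μ := by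
    rw [← integral_indicator (hsm.inter hA)]
    exact (integral_congr_ae (Filter.Eventually.of_forall fun x => hmul_ind (μ[Y|m]) x)).symm
  have hYH₁ : Integrable (Y * H₁) μ :=
    hYi.mul_bdd' hH₁i.aestronglyMeasurable hH₁_bdd
  have hYH₂ : Integrable (Y * H₂) μ :=
    hYi.mul_bdd' ((hH₂m.mono hm).aestronglyMeasurable) hH₂_bdd
  -- step (2) : ∫ Y * H₁ = ∫ Y * H₂ using Lemma B
  have e2 : ∫ ω, Y ω * H₁ ω ∂μ = ∫ ω, Y ω * H₂ ω ∂μ := by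
    rw [integral_mul_condexp_aux hm₁ hYm₁ hYH₁ hH₁i,
      integral_mul_condexp_aux hm₁ hYm₁ hYH₂ hH₂i]
    refine integral_congr_ae ?_
    filter_upwards [hB] with ω hω
    rw [hω]
  -- step (3) : ∫ Y * H₂ = ∫ (μ[Y|m]) * H₂
  have e3 : ∫ ω, Y ω * H₂ ω ∂μ = ∫ ω, (μ[Y|m]) ω * H₂ ω ∂μ := by
    have h1 : ∫ ω, H₂ ω * Y ω ∂μ = ∫ ω, H₂ ω * (μ[Y|m]) ω ∂μ :=
      integral_mul_condexp_aux hm hH₂m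
        (hYH₂.congr (Filter.Eventually.of_forall fun ω => mul_comm _ _)) hYi
    calc ∫ ω, Y ω * H₂ ω ∂μ = ∫ ω, H₂ ω * Y ω ∂μ := by simp_rw [mul_comm]
      _ = ∫ ω, H₂ ω * (μ[Y|m]) ω ∂μ := h1
      _ = ∫ ω, (μ[Y|m]) ω * H₂ ω ∂μ := by simp_rw [mul_comm]
  -- step (4) : ∫ (μ[Y|m]) * H₂ = ∫ (μ[Y|m]) * H₁
  have e4 : ∫ ω, (μ[Y|m]) ω * H₂ ω ∂μ = ∫ ω, (μ[Y|m]) ω * H₁ ω ∂μ := by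
    set F : Ω → ℝ := fun ω => (μ[Y|m]) ω * s.indicator (fun _ => (1 : ℝ)) ω with hF_def
    have hFm : StronglyMeasurable[m] F :=
      hfYm.mul (stronglyMeasurable_const.indicator hs)
    have hFi : Integrable F μ := hfYi.mul_bdd'
      ((stronglyMeasurable_const.indicator hs).mono hm).aestronglyMeasurable
      (Filter.Eventually.of_forall fun ω => norm_indicator_one_le _ ω)
    have hIA : Integrable (A.indicator (fun _ => (1 : ℝ))) μ := (integrable_const 1).indicator hA
    have hFIA : Integrable (F * A.indicator (fun _ => (1 : ℝ))) μ :=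
      hFi.mul_bdd' ((integrable_const (1 : ℝ)).indicator hA).aestronglyMeasurable
        (Filter.Eventually.of_forall fun ω => norm_indicator_one_le _ ω)
    have h1 : ∫ ω, F ω * A.indicator (fun _ => (1 : ℝ)) ω ∂μ
        = ∫ ω, F ω * g ω ∂μ := integral_mul_condexp_aux hm hFm hFIA hIA
    have lhs_eq : ∀ ω, (μ[Y|m]) ω * H₂ ω = F ω * g ω := by
      intro ω; simp only [F, H₂]; ring
    have rhs_eq : ∀ ω, (μ[Y|m]) ω * H₁ ω = F ω * A.indicator (fun _ => (1 : ℝ)) ω := by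
      intro ω
      by_cases hx : ω ∈ s <;> by_cases hy : ω ∈ A <;>
        simp [F, H₁, hx, hy, Set.mem_inter_iff]
    calc ∫ ω, (μ[Y|m]) ω * H₂ ω ∂μ = ∫ ω, F ω * g ω ∂μ :=
          integral_congr_ae (Filter.Eventually.of_forall lhs_eq)
      _ = ∫ ω, F ω * A.indicator (fun _ => (1 : ℝ)) ω ∂μ := h1.symm
      _ = ∫ ω, (μ[Y|m]) ω * H₁ ω ∂μ :=
          integral_congr_ae (Filter.Eventually.of_forall fun ω => (rhs_eq ω).symm)
  rw [e1, e2, e3, e4, ← e5]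

end Aux

/-- Under unconfoundedness, regressing the potential outcome `Y₁` on the covariates within
the treated group recovers the population regression function:
`μ₁[Y₁ | σ(X)] = μ[Y₁ | σ(X)]` holds `μ₁`-a.e., where `μ₁ = μ[·|{T = 1}]`. -/
theorem condexp_cond_treated_eq
    {Ω 𝒳 : Type*} {mΩ : MeasurableSpace Ω} [StandardBorelSpace Ω] [MeasurableSpace 𝒳]
    (μ : Measure Ω) [IsProbabilityMeasure μ]
    (X : Ω → 𝒳) (hX : Measurable X)
    (T : Ω → ℝ) (hT : Measurable T)
    (Y₁ : Ω → ℝ) (hY₁ : Integrable Y₁ μ)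
    (h_unconf : CondIndepFun (MeasurableSpace.comap X inferInstance) hX.comap_le Y₁ T μ)
    (hT1 : 0 < μ {ω | T ω = 1}) :
    (μ[|{ω | T ω = 1}])[Y₁ | MeasurableSpace.comap X inferInstance]
      =ᵐ[μ[|{ω | T ω = 1}]] μ[Y₁ | MeasurableSpace.comap X inferInstance] := by
  have hm : MeasurableSpace.comap X inferInstance ≤ mΩ := hX.comap_le
  have hA_eq : {ω | T ω = 1} = T ⁻¹' {1} := by ext ω; simp
  have hA : MeasurableSet (T ⁻¹' {1}) := hT (measurableSet_singleton 1)
  rw [hA_eq] at hT1 ⊢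
  set A : Set Ω := T ⁻¹' {1} with hA_def
  have hA0 : μ A ≠ 0 := hT1.ne'
  have h_inv_ne_top : (μ A)⁻¹ ≠ ⊤ := ENNReal.inv_ne_top.mpr hA0
  -- measurable representative of Y₁
  set Y : Ω → ℝ := hY₁.aestronglyMeasurable.mk Y₁ with hY_def
  have hYsm : StronglyMeasurable Y := hY₁.aestronglyMeasurable.stronglyMeasurable_mk
  have hY : Measurable Y := hYsm.measurable
  have hYeq : Y₁ =ᵐ[μ] Y := hY₁.aestronglyMeasurable.ae_eq_mk
  have hYi : Integrable Y μ := hY₁.congr hYeq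
  -- transfer conditional independence to Y
  have h_unconf' : CondIndepFun (MeasurableSpace.comap X inferInstance) hm Y T μ := by
    have hnull : μ {ω | ¬ Y₁ ω = Y ω} = 0 := ae_iff.mp hYeq
    obtain ⟨N, hNsub, hNm, hN0⟩ := exists_measurable_superset_of_null hnull
    -- N is a measurable superset of {Y₁ ≠ Y} with μ N = 0
    have hker0 : ∀ᵐ ω ∂(μ.trim hm),
        condExpKernel μ (MeasurableSpace.comap X inferInstance) ω N = 0 := by
      have h1 : (fun ω =>
            (condExpKernel μ (MeasurableSpace.comap X inferInstance) ω N).toReal)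
          =ᵐ[μ.trim hm] μ⟦N|MeasurableSpace.comap X inferInstance⟧ :=
        condExpKernel_ae_eq_trim_condExp hm hNm
      have h2 : (μ⟦N|MeasurableSpace.comap X inferInstance⟧) =ᵐ[μ] 0 := by
        have hind : N.indicator (fun _ => (1 : ℝ)) =ᵐ[μ] 0 := by
          have hNae : ∀ᵐ ω ∂μ, ω ∉ N := by
            rw [ae_iff]; simpa using hN0
          filter_upwards [hNae] with ω hω
          simp [Set.indicator_of_notMem hω]
        calc (μ⟦N|MeasurableSpace.comap X inferInstance⟧)
            =ᵐ[μ] μ[(0 : Ω → ℝ)|MeasurableSpace.comap X inferInstance] :=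
              condExp_congr_ae hind
          _ = 0 := condExp_zero
      have h2' : (μ⟦N|MeasurableSpace.comap X inferInstance⟧) =ᵐ[μ.trim hm] 0 :=
        (StronglyMeasurable.ae_eq_trim_iff hm stronglyMeasurable_condExp stronglyMeasurable_const).mpr h2
      filter_upwards [h1, h2'] with ω hω1 hω2
      have hto : (condExpKernel μ (MeasurableSpace.comap X inferInstance) ω N).toReal = 0 := by
        rw [hω1]; exact hω2
      rcases (ENNReal.toReal_eq_zero_iff _).mp hto with h | h
      · exact h
      · exact absurd h (measure_ne_top _ _)
    refine Kernel.IndepFun.congr' h_unconf ?_ ?_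
    · filter_upwards [hker0] with ω hω
      exact ae_iff.mpr (measure_mono_null hNsub hω)
    · exact Filter.Eventually.of_forall fun ω => Filter.EventuallyEq.rfl
  -- conditional measure
  haveI hμ₁prob : IsProbabilityMeasure (μ[|A]) := cond_isProbabilityMeasure hA0
  have hcond_eq : (μ[|A]) = (μ A)⁻¹ • μ.restrict A := rfl
  have hY₁μ₁ : Integrable Y₁ (μ[|A]) := by
    rw [hcond_eq]
    exact (hY₁.restrict (s := A)).smul_measure h_inv_ne_top
  have hcondexp_int :
      Integrable (μ[Y₁|MeasurableSpace.comap X inferInstance]) (μ[|A]) := by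
    rw [hcond_eq]
    exact ((integrable_condExp (f := Y₁)
      (m := MeasurableSpace.comap X inferInstance)).restrict (s := A)).smul_measure h_inv_ne_top
  have hcondexp_congr : μ[Y₁|MeasurableSpace.comap X inferInstance]
      =ᵐ[μ] μ[Y|MeasurableSpace.comap X inferInstance] := condExp_congr_ae hYeq
  -- apply uniqueness of conditional expectation
  refine (ae_eq_condExp_of_forall_setIntegral_eq hm hY₁μ₁
    (fun s _ _ => hcondexp_int.integrableOn) (fun s hs _ => ?_)
    (StronglyMeasurable.aestronglyMeasurable stronglyMeasurable_condExp)).symm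
  -- set-integral equality
  have hsm : MeasurableSet s := hm s hs
  have hrestrict : (μ[|A]).restrict s = (μ A)⁻¹ • μ.restrict (s ∩ A) := by
    rw [hcond_eq, Measure.restrict_smul, Measure.restrict_restrict hsm]
  rw [show (∫ x in s, (μ[Y₁|MeasurableSpace.comap X inferInstance]) x ∂(μ[|A]))
      = ((μ A)⁻¹).toReal • ∫ x in s ∩ A, (μ[Y₁|MeasurableSpace.comap X inferInstance]) x ∂μ by
    rw [hrestrict, integral_smul_measure],
    show (∫ x in s, Y₁ x ∂(μ[|A]))
      = ((μ A)⁻¹).toReal • ∫ x in s ∩ A, Y₁ x ∂μ by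
    rw [hrestrict, integral_smul_measure]]
  congr 1
  calc ∫ x in s ∩ A, (μ[Y₁|MeasurableSpace.comap X inferInstance]) x ∂μ
      = ∫ x in s ∩ A, (μ[Y|MeasurableSpace.comap X inferInstance]) x ∂μ :=
        integral_congr_ae (ae_restrict_of_ae hcondexp_congr)
    _ = ∫ x in s ∩ A, Y x ∂μ := (key_setIntegral hm μ hY hYi hT h_unconf' hs).symm
    _ = ∫ x in s ∩ A, Y₁ x ∂μ := integral_congr_ae (ae_restrict_of_ae hYeq.symm)
end

section
/- Let (Ω, 𝓕, μ) be a standard Borel probability space, X : Ω → 𝒳 measurable, T : Ω → ℝ measurable, and Y₁, Y₀ : Ω → ℝ integrable. Assume unconfoundedness ((Y₁, Y₀) conditionally independent of T given σ(X)) and μ{T = 1} > 0, and let μ₁ = μ[· | {T = 1}]. Define the pseudo-outcome D¹ = Y₁ − μ[Y₀ | σ(X)]. Then the conditional expectation of D¹ given σ(X) under the conditional measure μ₁ equals the CATE: μ₁[D¹ | σ(X)] = μ[Y₁ − Y₀ | σ(X)] μ₁-almost everywhere. -/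
open MeasureTheory ProbabilityTheory

section Aux

variable {Ω : Type*} {m' : MeasurableSpace Ω} {mΩ : MeasurableSpace Ω} [StandardBorelSpace Ω]
  {hm' : m' ≤ mΩ} {μ : Measure Ω} [IsFiniteMeasure μ]

/-- Conditional independence is preserved under a.e. modification of the first function. -/
lemma condIndepFun_ae_eq_left {β γ : Type*} [MeasurableSpace β] [MeasurableSpace γ]
    {f f' : Ω → β} {g : Ω → γ} (h : CondIndepFun m' hm' f g (μ := μ)) (hff' : f =ᵐ[μ] f') :
    CondIndepFun m' hm' f' g (μ := μ) := by
  refine Kernel.IndepFun.congr' h ?_ (Filter.Eventually.of_forall fun a => Filter.EventuallyEq.rfl)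
  set N := toMeasurable μ {ω | f ω ≠ f' ω} with hN
  have hNmeas : MeasurableSet N := measurableSet_toMeasurable _ _
  have hNnull : μ N = 0 := by rw [hN, measure_toMeasurable]; exact hff'
  have h1 : (fun a => (condExpKernel μ m' a N).toReal) =ᵐ[μ] μ⟦N | m'⟧ :=
    condExpKernel_ae_eq_condExp hm' hNmeas
  have h2 : μ⟦N | m'⟧ =ᵐ[μ] 0 := by
    have hind : N.indicator (fun _ => (1 : ℝ)) =ᵐ[μ] 0 := by
      filter_upwards [measure_eq_zero_iff_ae_notMem.mp hNnull] with ω hω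
      simp [Set.indicator_of_notMem hω]
    exact (condExp_congr_ae hind).trans (by rw [condExp_zero])
  have h3 : ∀ᵐ a ∂μ, condExpKernel μ m' a N = 0 := by
    filter_upwards [h1.trans h2] with a ha
    have hne : condExpKernel μ m' a N ≠ ⊤ := measure_ne_top _ _
    simpa [ENNReal.toReal_eq_zero_iff, hne] using ha
  have hmeasfun : Measurable[m'] fun a => condExpKernel μ m' a N :=
    measurable_condExpKernel hNmeas
  have h4 : ∀ᵐ a ∂μ.trim hm', condExpKernel μ m' a N = 0 := by
    rw [ae_iff] at h3 ⊢
    have hms : MeasurableSet[m'] {a | ¬condExpKernel μ m' a N = 0} := by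
      have := (hmeasfun (MeasurableSet.singleton (0 : ENNReal))).compl
      exact this
    rw [trim_measurableSet_eq hm' hms]
    exact h3
  filter_upwards [h4] with a ha
  have : condExpKernel μ m' a {ω | f ω ≠ f' ω} = 0 :=
    measure_mono_null (subset_toMeasurable μ _) ha
  exact this

variable (hm') in
/-- The key identity: if `W ⟂ T | m'` (conditionally independent) and `φ` is an integrable
`σ(W)`-measurable function, then the integral of `φ` over `s ∩ {T = 1}` (for `s ∈ m'`)
coincides with that of its conditional expectation `μ[φ|m']`. -/
lemma setIntegral_eq_of_condIndepFun [IsProbabilityMeasure μ]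
    {W : Ω → ℝ × ℝ} (hW : Measurable W) {T : Ω → ℝ} (hT : Measurable T)
    (h : CondIndepFun m' hm' W T (μ := μ))
    {φ : Ω → ℝ} (hφ : Integrable φ (μ.trim hW.comap_le))
    {s : Set Ω} (hs : MeasurableSet[m'] s) :
    ∫ ω in s ∩ T ⁻¹' {1}, φ ω ∂μ = ∫ ω in s ∩ T ⁻¹' {1}, (μ[φ|m']) ω ∂μ := by
  set A : Set Ω := T ⁻¹' {1} with hA_def
  have hA : MeasurableSet A := hT (measurableSet_singleton 1)
  have hprod : ∀ B : Set Ω, MeasurableSet[MeasurableSpace.comap W inferInstance] B →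
      μ⟦B ∩ A | m'⟧ =ᵐ[μ] μ⟦B | m'⟧ * μ⟦A | m'⟧ := by
    intro B hB
    exact (condIndepFun_iff m' hm' W T hW hT μ).mp h B A hB
      ⟨{1}, measurableSet_singleton 1, rfl⟩
  -- the property to be proven by induction on integrable functions
  set P : (Ω → ℝ) → Prop := fun φ => ∀ t : Set Ω, MeasurableSet[m'] t →
    ∫ ω in t ∩ A, φ ω ∂μ = ∫ ω in t ∩ A, (μ[φ|m']) ω ∂μ with hP
  suffices hsuff : P φ from hsuff s hs
  have h_ind : ∀ (c : ℝ) ⦃B : Set Ω⦄,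
      MeasurableSet[MeasurableSpace.comap W inferInstance] B →
      μ.trim hW.comap_le B < ⊤ → P (B.indicator fun _ => c) := by
    intro c B hB _
    intro t ht
    have htΩ : MeasurableSet t := hm' _ ht
    have hBΩ : MeasurableSet B := hW.comap_le _ hB
    have hsmul : B.indicator (fun _ => c) = c • B.indicator (fun _ => (1 : ℝ)) := by
      ext ω; by_cases hω : ω ∈ B <;> simp [Set.indicator, hω]
    set I : Ω → ℝ := B.indicator (fun _ => (1 : ℝ)) with hI_def
    have hI_int : Integrable I μ := (integrable_const (1 : ℝ)).indicator hBΩ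
    have hIA_int : Integrable (A.indicator (fun _ => (1 : ℝ))) μ :=
      (integrable_const (1 : ℝ)).indicator hA
    -- LHS
    have hLHS : ∫ ω in t ∩ A, I ω ∂μ = ∫ ω in t, (μ⟦B ∩ A | m'⟧) ω ∂μ := by
      rw [← setIntegral_indicator hA]
      have : A.indicator I = (B ∩ A).indicator (fun _ => (1 : ℝ)) := by
        rw [hI_def, Set.indicator_indicator, Set.inter_comm]
      rw [this, setIntegral_condExp hm' ((integrable_const (1 : ℝ)).indicator (hBΩ.inter hA)) ht]
    -- RHS
    have hRHS : ∫ ω in t ∩ A, (μ[I|m']) ω ∂μ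
        = ∫ ω in t, ((μ⟦B | m'⟧) * (μ⟦A | m'⟧)) ω ∂μ := by
      rw [← setIntegral_indicator hA]
      have h1 : A.indicator (μ[I|m'])
          = (μ[I|m']) * A.indicator (fun _ => (1 : ℝ)) := by
        ext ω; by_cases hω : ω ∈ A <;> simp [Set.indicator, hω]
      have h2 : Integrable ((μ[I|m']) * A.indicator (fun _ => (1 : ℝ))) μ := by
        rw [← h1]; exact integrable_condExp.indicator hA
      rw [h1, ← setIntegral_condExp hm' h2 ht]
      refine setIntegral_congr_ae htΩ ?_
      filter_upwards [condExp_mul_of_stronglyMeasurable_left stronglyMeasurable_condExp h2 hIA_int]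
        with ω hω _
      exact hω
    have hmid : ∫ ω in t, (μ⟦B ∩ A | m'⟧) ω ∂μ
        = ∫ ω in t, ((μ⟦B | m'⟧) * (μ⟦A | m'⟧)) ω ∂μ := by
      refine setIntegral_congr_ae htΩ ?_
      filter_upwards [hprod B hB] with ω hω _
      exact hω
    calc ∫ ω in t ∩ A, B.indicator (fun _ => c) ω ∂μ
        = c * ∫ ω in t ∩ A, I ω ∂μ := by
          rw [hsmul]; simp only [Pi.smul_apply, smul_eq_mul]; rw [integral_const_mul]
      _ = c * ∫ ω in t ∩ A, (μ[I|m']) ω ∂μ := by rw [hLHS, hmid, ← hRHS]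
      _ = ∫ ω in t ∩ A, (c • (μ[I|m'])) ω ∂μ := by
          simp only [Pi.smul_apply, smul_eq_mul]; rw [integral_const_mul]
      _ = ∫ ω in t ∩ A, (μ[B.indicator fun _ => c|m']) ω ∂μ := by
          refine setIntegral_congr_ae (htΩ.inter hA) ?_
          have : μ[c • I|m'] =ᵐ[μ] c • μ[I|m'] := condExp_smul c I m'
          rw [hsmul]
          filter_upwards [this] with ω hω _
          exact hω.symm
  have h_add : ∀ ⦃f g : Ω → ℝ⦄, Disjoint (Function.support f) (Function.support g) →
      Integrable f (μ.trim hW.comap_le) → Integrable g (μ.trim hW.comap_le) →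
      P f → P g → P (f + g) := by
    intro f g _ hf hg hPf hPg t ht
    have hfμ : Integrable f μ := integrable_of_integrable_trim _ hf
    have hgμ : Integrable g μ := integrable_of_integrable_trim _ hg
    have htΩ : MeasurableSet (t ∩ A) := (hm' _ ht).inter hA
    have h1 : ∫ ω in t ∩ A, (f + g) ω ∂μ
        = ∫ ω in t ∩ A, f ω ∂μ + ∫ ω in t ∩ A, g ω ∂μ := by
      simpa using integral_add hfμ.integrableOn hgμ.integrableOn
    have h2 : ∫ ω in t ∩ A, (μ[f + g|m']) ω ∂μ
        = ∫ ω in t ∩ A, (μ[f|m']) ω ∂μ + ∫ ω in t ∩ A, (μ[g|m']) ω ∂μ := by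
      rw [← integral_add integrable_condExp.integrableOn integrable_condExp.integrableOn]
      refine setIntegral_congr_ae htΩ ?_
      filter_upwards [condExp_add hfμ hgμ (m := m')] with ω hω _
      simpa using hω
    rw [h1, h2, hPf t ht, hPg t ht]
  have h_closed : IsClosed {f : Lp ℝ 1 (μ.trim hW.comap_le) | P f} := by
    have hdist : ∀ f g : Lp ℝ 1 (μ.trim hW.comap_le),
        ∫ ω, |f ω - g ω| ∂μ ≤ dist f g := by
      intro f g
      have hsub : ⇑(f - g) =ᵐ[μ.trim hW.comap_le] ⇑f - ⇑g := Lp.coeFn_sub f g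
      have h1 : dist f g = ∫ ω, ‖(f - g) ω‖ ∂μ.trim hW.comap_le := by
        rw [dist_eq_norm, L1.norm_eq_integral_norm]
      have h2 : ∫ ω, ‖(f - g) ω‖ ∂μ.trim hW.comap_le = ∫ ω, ‖(f - g) ω‖ ∂μ :=
        (integral_trim_ae _ (Lp.aestronglyMeasurable (f - g)).norm).symm
      have h3 : ∫ ω, ‖(f - g) ω‖ ∂μ = ∫ ω, |f ω - g ω| ∂μ := by
        refine integral_congr_ae ?_
        filter_upwards [ae_eq_of_ae_eq_trim hsub] with ω hω
        rw [hω]; simp [Real.norm_eq_abs]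
      rw [h1, h2, h3]
    have key : ∀ (t : Set Ω), MeasurableSet[m'] t →
        IsClosed {f : Lp ℝ 1 (μ.trim hW.comap_le) |
          ∫ ω in t ∩ A, f ω ∂μ = ∫ ω in t ∩ A, (μ[⇑f|m']) ω ∂μ} := by
      intro t _
      have hG : LipschitzWith 1 fun f : Lp ℝ 1 (μ.trim hW.comap_le) =>
          ∫ ω in t ∩ A, f ω ∂μ := by
        refine LipschitzWith.of_dist_le_mul fun f g => ?_
        rw [NNReal.coe_one, one_mul, Real.dist_eq]
        have hfμ : Integrable (⇑f) μ := integrable_of_integrable_trim _ (L1.integrable_coeFn f)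
        have hgμ : Integrable (⇑g) μ := integrable_of_integrable_trim _ (L1.integrable_coeFn g)
        have h1 : ∫ ω in t ∩ A, f ω ∂μ - ∫ ω in t ∩ A, g ω ∂μ
            = ∫ ω in t ∩ A, (f ω - g ω) ∂μ :=
          (integral_sub hfμ.integrableOn hgμ.integrableOn).symm
        rw [h1]
        calc |∫ ω in t ∩ A, (f ω - g ω) ∂μ| ≤ ∫ ω in t ∩ A, |f ω - g ω| ∂μ := by
              simpa [Real.norm_eq_abs] using
                norm_integral_le_integral_norm (μ := μ.restrict (t ∩ A)) fun ω => f ω - g ω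
          _ ≤ ∫ ω, |f ω - g ω| ∂μ :=
              integral_mono_measure Measure.restrict_le_self
                (Filter.Eventually.of_forall fun ω => abs_nonneg _) (hfμ.sub hgμ).abs
          _ ≤ dist f g := hdist f g
      have hH : LipschitzWith 1 fun f : Lp ℝ 1 (μ.trim hW.comap_le) =>
          ∫ ω in t ∩ A, (μ[⇑f|m']) ω ∂μ := by
        refine LipschitzWith.of_dist_le_mul fun f g => ?_
        rw [NNReal.coe_one, one_mul, Real.dist_eq]
        have hfμ : Integrable (⇑f) μ := integrable_of_integrable_trim _ (L1.integrable_coeFn f)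
        have hgμ : Integrable (⇑g) μ := integrable_of_integrable_trim _ (L1.integrable_coeFn g)
        have h1 : ∫ ω in t ∩ A, (μ[⇑f|m']) ω ∂μ - ∫ ω in t ∩ A, (μ[⇑g|m']) ω ∂μ
            = ∫ ω in t ∩ A, ((μ[⇑f|m']) ω - (μ[⇑g|m']) ω) ∂μ :=
          (integral_sub integrable_condExp.integrableOn integrable_condExp.integrableOn).symm
        rw [h1]
        have h2 : ∫ ω in t ∩ A, ((μ[⇑f|m']) ω - (μ[⇑g|m']) ω) ∂μ
            = ∫ ω in t ∩ A, (μ[⇑f - ⇑g|m']) ω ∂μ := by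
          refine setIntegral_congr_ae ((hm' _ ‹MeasurableSet[m'] t›).inter hA) ?_
          filter_upwards [condExp_sub hfμ hgμ (m := m')] with ω hω _
          simpa using hω.symm
        rw [h2]
        calc |∫ ω in t ∩ A, (μ[⇑f - ⇑g|m']) ω ∂μ|
            ≤ ∫ ω in t ∩ A, |(μ[⇑f - ⇑g|m']) ω| ∂μ := by
              simpa [Real.norm_eq_abs] using
                norm_integral_le_integral_norm (μ := μ.restrict (t ∩ A)) (μ[⇑f - ⇑g|m'])
          _ ≤ ∫ ω, |(μ[⇑f - ⇑g|m']) ω| ∂μ :=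
              integral_mono_measure Measure.restrict_le_self
                (Filter.Eventually.of_forall fun ω => abs_nonneg _) integrable_condExp.abs
          _ ≤ ∫ ω, |f ω - g ω| ∂μ := integral_abs_condExp_le _
          _ ≤ dist f g := hdist f g
      exact isClosed_eq hG.continuous hH.continuous
    have : {f : Lp ℝ 1 (μ.trim hW.comap_le) | P f}
        = ⋂ (t : {t : Set Ω // MeasurableSet[m'] t}),
          {f : Lp ℝ 1 (μ.trim hW.comap_le) |
            ∫ ω in (t : Set Ω) ∩ A, f ω ∂μ = ∫ ω in (t : Set Ω) ∩ A, (μ[⇑f|m']) ω ∂μ} := by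
      ext f
      simp only [Set.mem_setOf_eq, Set.mem_iInter, Subtype.forall, hP]
    rw [this]
    exact isClosed_iInter fun t => key t t.2
  have h_ae : ∀ ⦃f g : Ω → ℝ⦄, f =ᵐ[μ.trim hW.comap_le] g →
      Integrable f (μ.trim hW.comap_le) → P f → P g := by
    intro f g hfg _ hPf t ht
    have hfgμ : f =ᵐ[μ] g := ae_eq_of_ae_eq_trim hfg
    have h1 : ∫ ω in t ∩ A, g ω ∂μ = ∫ ω in t ∩ A, f ω ∂μ :=
      integral_congr_ae (ae_restrict_of_ae hfgμ.symm)
    have h2 : ∫ ω in t ∩ A, (μ[g|m']) ω ∂μ = ∫ ω in t ∩ A, (μ[f|m']) ω ∂μ :=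
      integral_congr_ae (ae_restrict_of_ae (Filter.EventuallyEq.symm
        (condExp_congr_ae hfgμ)))
    rw [h1, h2]
    exact hPf t ht
  exact @Integrable.induction Ω ℝ (MeasurableSpace.comap W inferInstance) _
    (μ.trim hW.comap_le) P h_ind h_add h_closed h_ae φ hφ

end Aux

theorem xlearner_aux {Ω : Type*} {m' : MeasurableSpace Ω} {mΩ : MeasurableSpace Ω}
    [StandardBorelSpace Ω] (hm' : m' ≤ mΩ)
    (μ : Measure Ω) [IsProbabilityMeasure μ]
    (T : Ω → ℝ) (hT : Measurable T)
    (Y₁ Y₀ : Ω → ℝ) (hY₁ : Integrable Y₁ μ) (hY₀ : Integrable Y₀ μ)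
    (h_unconf : CondIndepFun m' hm' (fun ω => (Y₁ ω, Y₀ ω)) T (μ := μ))
    (hT1 : 0 < μ {ω | T ω = 1})
    (D1 : Ω → ℝ)
    (hD : D1 = fun ω => Y₁ ω - (μ[Y₀ | m']) ω) :
    (μ[|{ω | T ω = 1}])[D1 | m'] =ᵐ[μ[|{ω | T ω = 1}]] μ[fun ω => Y₁ ω - Y₀ ω | m'] := by
  have hA_eq : {ω | T ω = 1} = T ⁻¹' {1} := rfl
  set A : Set Ω := T ⁻¹' {1} with hA_def
  have hA : MeasurableSet[mΩ] A := hT (measurableSet_singleton 1)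
  have hμA : μ A ≠ 0 := by rw [← hA_eq]; exact hT1.ne'
  have hμA_top : μ A ≠ ⊤ := measure_ne_top μ A
  have hc_top : (μ A)⁻¹ ≠ ⊤ := ENNReal.inv_ne_top.mpr hμA
  rw [hA_eq]
  haveI : IsProbabilityMeasure (μ[|A]) := cond_isProbabilityMeasure_of_finite hμA hμA_top
  -- measurable representatives
  set Y₁' : Ω → ℝ := hY₁.1.mk Y₁ with hY₁'_def
  set Y₀' : Ω → ℝ := hY₀.1.mk Y₀ with hY₀'_def
  have hmY₁' : Measurable[mΩ] Y₁' := hY₁.1.stronglyMeasurable_mk.measurable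
  have hmY₀' : Measurable[mΩ] Y₀' := hY₀.1.stronglyMeasurable_mk.measurable
  have haeY₁ : Y₁ =ᵐ[μ] Y₁' := hY₁.1.ae_eq_mk
  have haeY₀ : Y₀ =ᵐ[μ] Y₀' := hY₀.1.ae_eq_mk
  have hY₁'_int : Integrable Y₁' μ := hY₁.congr haeY₁
  set W : Ω → ℝ × ℝ := fun ω => (Y₁' ω, Y₀' ω) with hW_def
  have hW : Measurable[mΩ] W := hmY₁'.prodMk hmY₀'
  have h_unconf' : CondIndepFun m' hm' W T μ := by
    refine condIndepFun_ae_eq_left h_unconf ?_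
    filter_upwards [haeY₁, haeY₀] with ω h1 h2
    simp [hW_def, ← h1, ← h2]
  -- Y₁' is σ(W)-measurable and integrable for the trimmed measure
  have hY₁'_meas_W : StronglyMeasurable[MeasurableSpace.comap W inferInstance] Y₁' := by
    have hWm : Measurable[MeasurableSpace.comap W inferInstance] W :=
      measurable_iff_comap_le.mpr le_rfl
    exact (measurable_fst.comp hWm).stronglyMeasurable
  have hY₁'_trim : Integrable Y₁' (μ.trim hW.comap_le) :=
    hY₁'_int.trim _ hY₁'_meas_W
  -- the key set-integral identity for Y₁
  have key : ∀ s : Set Ω, MeasurableSet[m'] s →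
      ∫ ω in s ∩ A, Y₁ ω ∂μ = ∫ ω in s ∩ A, (μ[Y₁|m']) ω ∂μ := by
    intro s hs
    have h1 : ∫ ω in s ∩ A, Y₁ ω ∂μ = ∫ ω in s ∩ A, Y₁' ω ∂μ :=
      integral_congr_ae (ae_restrict_of_ae haeY₁)
    have h2 : ∫ ω in s ∩ A, (μ[Y₁|m']) ω ∂μ = ∫ ω in s ∩ A, (μ[Y₁'|m']) ω ∂μ :=
      integral_congr_ae (ae_restrict_of_ae (condExp_congr_ae haeY₁))
    rw [h1, h2]
    exact setIntegral_eq_of_condIndepFun hm' hW hT h_unconf' hY₁'_trim hs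
  -- integrability of D1
  have hD1_int_μ : Integrable D1 μ := by
    rw [hD]
    exact hY₁.sub integrable_condExp
  have h_int_cond : ∀ {u : Ω → ℝ}, Integrable u μ → Integrable u (μ[|A]) := by
    intro u hu
    rw [ProbabilityTheory.cond]
    exact (hu.restrict (s := A)).smul_measure hc_top
  have hD1_int : Integrable D1 (μ[|A]) := h_int_cond hD1_int_μ
  -- reduce set integrals over the conditional measure to set integrals over μ
  have h_setInt : ∀ (u : Ω → ℝ) (s : Set Ω), MeasurableSet[mΩ] s →
      ∫ ω in s, u ω ∂(μ[|A]) = (μ A)⁻¹.toReal • ∫ ω in s ∩ A, u ω ∂μ := by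
    intro u s hsΩ
    rw [ProbabilityTheory.cond, Measure.restrict_smul, integral_smul_measure,
      Measure.restrict_restrict hsΩ]
  -- conclude by the characterization of the conditional expectation
  refine (ae_eq_condExp_of_forall_setIntegral_eq hm' hD1_int ?_ ?_ ?_).symm
  · intro s _ _
    exact (h_int_cond integrable_condExp).integrableOn
  · intro s hs _
    rw [h_setInt _ s (hm' _ hs), h_setInt _ s (hm' _ hs)]
    congr 1
    have hsA : MeasurableSet[mΩ] (s ∩ A) := (hm' _ hs).inter hA
    have hLHS : ∫ ω in s ∩ A, (μ[fun ω => Y₁ ω - Y₀ ω|m']) ω ∂μ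
        = ∫ ω in s ∩ A, ((μ[Y₁|m']) ω - (μ[Y₀|m']) ω) ∂μ := by
      refine setIntegral_congr_ae hsA ?_
      have hsub : μ[Y₁ - Y₀|m'] =ᵐ[μ] μ[Y₁|m'] - μ[Y₀|m'] := condExp_sub hY₁ hY₀ m'
      have heq : (fun ω => Y₁ ω - Y₀ ω) = Y₁ - Y₀ := rfl
      rw [heq]
      filter_upwards [hsub] with ω hω _
      simpa using hω
    have hRHS : ∫ ω in s ∩ A, D1 ω ∂μ
        = ∫ ω in s ∩ A, ((μ[Y₁|m']) ω - (μ[Y₀|m']) ω) ∂μ := by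
      rw [hD]
      rw [integral_sub hY₁.integrableOn integrable_condExp.integrableOn,
        integral_sub integrable_condExp.integrableOn integrable_condExp.integrableOn,
        key s hs]
    rw [hLHS, hRHS]
  · exact StronglyMeasurable.aestronglyMeasurable stronglyMeasurable_condExp

/-- The population-level justification of the X-learner's first cross-fitting step: under
unconfoundedness, regressing the pseudo-outcome `D1 = Y₁ - μ[Y₀ | σ(X)]` on the covariates
within the treated group recovers the CATE `μ[Y₁ - Y₀ | σ(X)]`. -/
theorem xlearner_pseudo_outcome_recovers_cate
    {Ω 𝒳 : Type*} {mΩ : MeasurableSpace Ω} [StandardBorelSpace Ω] [MeasurableSpace 𝒳]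
    (μ : Measure Ω) [IsProbabilityMeasure μ]
    (X : Ω → 𝒳) (hX : Measurable X)
    (T : Ω → ℝ) (hT : Measurable T)
    (Y₁ Y₀ : Ω → ℝ) (hY₁ : Integrable Y₁ μ) (hY₀ : Integrable Y₀ μ)
    (h_unconf : CondIndepFun (MeasurableSpace.comap X inferInstance) hX.comap_le
      (fun ω => (Y₁ ω, Y₀ ω)) T μ)
    (hT1 : 0 < μ {ω | T ω = 1})
    (D1 : Ω → ℝ)
    (hD : D1 = fun ω => Y₁ ω - (μ[Y₀ | MeasurableSpace.comap X inferInstance]) ω) :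
    (μ[|{ω | T ω = 1}])[D1 | MeasurableSpace.comap X inferInstance]
      =ᵐ[μ[|{ω | T ω = 1}]]
        μ[fun ω => Y₁ ω - Y₀ ω | MeasurableSpace.comap X inferInstance] := by
  exact xlearner_aux hX.comap_le μ T hT Y₁ Y₀ hY₁ hY₀ h_unconf hT1 D1 hD
end

section
/- Let (Ω, 𝓕, μ) be a standard Borel probability space, W : Ω → ℛ measurable with ℛ a standard Borel space, V : Ω → ℝ² measurable, and T : Ω → {0, 1} ⊆ ℝ measurable with 0 < μ{T = 1} < 1. Let μ₁ = μ[· | {T = 1}] and μ₀ = μ[· | {T = 0}], and assume the overlap condition 0 < μ[T | σ(W)] < 1 μ-a.e. If the conditional distribution (regular conditional probability) of V given W under μ₁ agrees with the conditional distribution of V given W under μ₀, almost everywhere with respect to the pushforward measure Map W μ, then V is conditionally independent of T given σ(W). -/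
open MeasureTheory ProbabilityTheory Set

section Aux

variable {Ω ℛ : Type*} {mΩ : MeasurableSpace Ω} [StandardBorelSpace Ω]
  [MeasurableSpace ℛ] [StandardBorelSpace ℛ]

/-- Restriction of a conditional measure. -/
lemma aux_restrict_cond (μ : Measure Ω) [IsProbabilityMeasure μ]
    {A C : Set Ω} (hA : MeasurableSet A) (hA0 : μ A ≠ 0) (hC : MeasurableSet C) :
    μ.restrict (A ∩ C) = μ A • ((μ[|A]).restrict C) := by
  have h : μ[|A] = (μ A)⁻¹ • μ.restrict A := rfl
  rw [h, Measure.restrict_smul, Measure.restrict_restrict hC, smul_smul,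
    ENNReal.mul_inv_cancel hA0 (measure_ne_top μ A), one_smul, Set.inter_comm]

/-- Key lintegral identities for the kernel `condDistrib V W (μ[|A])`, integrated
against `μ` over a `σ(W)`-measurable set. -/
lemma aux_key_lint (μ : Measure Ω) [IsProbabilityMeasure μ]
    (W : Ω → ℛ) (hW : Measurable W) (V : Ω → ℝ × ℝ) (hV : Measurable V)
    {A : Set Ω} (hA : MeasurableSet A) (hA0 : μ A ≠ 0) (hAc0 : μ Aᶜ ≠ 0)
    (h_eq : ∀ᵐ r ∂(μ.map W),
      condDistrib V W (μ[|A]) r = condDistrib V W (μ[|Aᶜ]) r)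
    {s : Set (ℝ × ℝ)} (hs : MeasurableSet s)
    {C : Set Ω} (hC : MeasurableSet[MeasurableSpace.comap W inferInstance] C) :
    (∫⁻ ω in A ∩ C, condDistrib V W (μ[|A]) (W ω) s ∂μ = μ ((C ∩ V ⁻¹' s) ∩ A))
    ∧ (∫⁻ ω in C, condDistrib V W (μ[|A]) (W ω) s ∂μ = μ (C ∩ V ⁻¹' s)) := by
  have hC' : MeasurableSet C := hW.comap_le _ hC
  haveI h1 : IsProbabilityMeasure (μ[|A]) := cond_isProbabilityMeasure hA0
  haveI h0 : IsProbabilityMeasure (μ[|Aᶜ]) := cond_isProbabilityMeasure hAc0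
  set κ := condDistrib V W (μ[|A]) with hκ
  -- part 1 : integral over A ∩ C
  have hpart1 : ∫⁻ ω in A ∩ C, κ (W ω) s ∂μ = μ ((C ∩ V ⁻¹' s) ∩ A) := by
    rw [aux_restrict_cond μ hA hA0 hC', lintegral_smul_measure,
      setLIntegral_condDistrib_of_measurableSet hW hV.aemeasurable hs hC,
      cond_apply hA, smul_eq_mul, ← mul_assoc, ENNReal.mul_inv_cancel hA0 (measure_ne_top μ A), one_mul,
      Set.inter_comm]
  -- the kernel also disintegrates μ[|Aᶜ]
  have hmap_ac : (μ[|Aᶜ]).map W ≪ μ.map W :=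
    Measure.AbsolutelyContinuous.map cond_absolutelyContinuous hW
  have hae0 : ∀ᵐ ω ∂(μ[|Aᶜ]), κ (W ω) = condDistrib V W (μ[|Aᶜ]) (W ω) :=
    ae_of_ae_map hW.aemeasurable (hmap_ac.ae_le h_eq)
  have hpart0 : ∫⁻ ω in Aᶜ ∩ C, κ (W ω) s ∂μ = μ ((C ∩ V ⁻¹' s) ∩ Aᶜ) := by
    rw [aux_restrict_cond μ hA.compl hAc0 hC', lintegral_smul_measure]
    have hcongr : ∫⁻ ω in C, κ (W ω) s ∂(μ[|Aᶜ])
        = ∫⁻ ω in C, condDistrib V W (μ[|Aᶜ]) (W ω) s ∂(μ[|Aᶜ]) :=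
      lintegral_congr_ae (ae_restrict_of_ae (hae0.mono fun ω h => by simp only [h]))
    rw [hcongr, setLIntegral_condDistrib_of_measurableSet hW hV.aemeasurable hs hC,
      cond_apply hA.compl, smul_eq_mul, ← mul_assoc,
      ENNReal.mul_inv_cancel hAc0 (measure_ne_top μ Aᶜ), one_mul, Set.inter_comm]
  refine ⟨hpart1, ?_⟩
  have hsplit : ∫⁻ ω in C, κ (W ω) s ∂μ
      = ∫⁻ ω in A ∩ C, κ (W ω) s ∂μ + ∫⁻ ω in Aᶜ ∩ C, κ (W ω) s ∂μ := by
    have h := (lintegral_add_compl (fun ω => κ (W ω) s) hA (μ := μ.restrict C)).symm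
    rwa [Measure.restrict_restrict hA, Measure.restrict_restrict hA.compl] at h
  rw [hsplit, hpart1, hpart0]
  have h2 : (C ∩ V ⁻¹' s) ∩ Aᶜ = (C ∩ V ⁻¹' s) \ A := by
    rw [Set.diff_eq]
  rw [h2, measure_inter_add_diff _ hA]

/-- The two conditional-expectation identities needed for the main theorem. -/
lemma aux_condexp (μ : Measure Ω) [IsProbabilityMeasure μ]
    (W : Ω → ℛ) (hW : Measurable W) (V : Ω → ℝ × ℝ) (hV : Measurable V)
    {A : Set Ω} (hA : MeasurableSet A) (hA0 : μ A ≠ 0) (hAc0 : μ Aᶜ ≠ 0)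
    (h_eq : ∀ᵐ r ∂(μ.map W),
      condDistrib V W (μ[|A]) r = condDistrib V W (μ[|Aᶜ]) r)
    {s : Set (ℝ × ℝ)} (hs : MeasurableSet s) :
    ((fun ω => (condDistrib V W (μ[|A]) (W ω) s).toReal) =ᵐ[μ]
       μ⟦V ⁻¹' s | MeasurableSpace.comap W inferInstance⟧)
    ∧ ((fun ω => (condDistrib V W (μ[|A]) (W ω) s).toReal *
          (μ⟦A | MeasurableSpace.comap W inferInstance⟧) ω) =ᵐ[μ]
        μ⟦V ⁻¹' s ∩ A | MeasurableSpace.comap W inferInstance⟧) := by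
  have hm : MeasurableSpace.comap W inferInstance ≤ mΩ := hW.comap_le
  haveI h1 : IsProbabilityMeasure (μ[|A]) := cond_isProbabilityMeasure hA0
  set κ := condDistrib V W (μ[|A]) with hκ
  set f : Ω → ℝ := fun ω => (κ (W ω) s).toReal with hf_def
  -- measurability of f
  have hf_meas_m : Measurable[MeasurableSpace.comap W inferInstance] fun ω => κ (W ω) s :=
    (Kernel.measurable_coe _ hs).comp (Measurable.of_comap_le le_rfl)
  have hf_meas : Measurable fun ω => κ (W ω) s := (Kernel.measurable_coe _ hs).comp hW
  have hf_sm : StronglyMeasurable[MeasurableSpace.comap W inferInstance] f :=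
    (@Measurable.ennreal_toReal _ (MeasurableSpace.comap W inferInstance) _
      hf_meas_m).stronglyMeasurable
  have hf_lt_top : ∀ ω, κ (W ω) s < ⊤ := fun ω => measure_lt_top _ _
  have hf_int : Integrable f μ := by
    refine integrable_toReal_of_lintegral_ne_top (μ := μ) hf_meas.aemeasurable (ne_of_lt ?_)
    calc ∫⁻ ω, κ (W ω) s ∂μ ≤ ∫⁻ _, 1 ∂μ := lintegral_mono fun ω => prob_le_one
      _ = μ univ := lintegral_one
      _ < ⊤ := measure_lt_top _ _
  have hf_bound : ∀ ω, ‖f ω‖ ≤ 1 := by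
    intro ω
    rw [Real.norm_eq_abs, abs_of_nonneg ENNReal.toReal_nonneg]
    simpa using ENNReal.toReal_mono (by simp) (prob_le_one (μ := κ (W ω)) (s := s))
  -- set integral of f in terms of lintegral
  have hf_setInt : ∀ {C : Set Ω}, MeasurableSet C →
      ∫ ω in C, f ω ∂μ = (∫⁻ ω in C, κ (W ω) s ∂μ).toReal := by
    intro C hC
    exact integral_toReal (hf_meas.aemeasurable.restrict (s := C))
      (Filter.Eventually.of_forall fun ω => hf_lt_top ω)
  -- K1
  have K1 : f =ᵐ[μ] μ⟦V ⁻¹' s | MeasurableSpace.comap W inferInstance⟧ := by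
    refine ae_eq_condExp_of_forall_setIntegral_eq hm
      ((integrable_const (1 : ℝ)).indicator (hV hs)) (fun C hC _ => hf_int.integrableOn)
      (fun C hC _ => ?_) hf_sm.aestronglyMeasurable
    rw [hf_setInt (hm _ hC), (aux_key_lint μ W hW V hV hA hA0 hAc0 h_eq hs hC).2,
      integral_indicator_const _ (hV hs), measureReal_def, Measure.restrict_apply (hV hs), smul_eq_mul, mul_one,
      Set.inter_comm]
  refine ⟨K1, ?_⟩
  -- K2
  have hind_int : Integrable (A.indicator fun _ => (1 : ℝ)) μ :=
    (integrable_const (1 : ℝ)).indicator hA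
  have hf_asm : AEStronglyMeasurable f μ := (hf_sm.mono hm).aestronglyMeasurable
  have hfi_int : Integrable (f * A.indicator fun _ => (1 : ℝ)) μ :=
    hind_int.bdd_mul hf_asm (Filter.Eventually.of_forall hf_bound)
  have hpull : μ[f * A.indicator fun _ => (1 : ℝ) | MeasurableSpace.comap W inferInstance]
      =ᵐ[μ] f * μ⟦A | MeasurableSpace.comap W inferInstance⟧ :=
    condExp_mul_of_stronglyMeasurable_left hf_sm hfi_int hind_int
  refine ae_eq_condExp_of_forall_setIntegral_eq hm
    ((integrable_const (1 : ℝ)).indicator ((hV hs).inter hA))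
    (fun C hC _ => (integrable_condExp.bdd_mul hf_asm (Filter.Eventually.of_forall hf_bound)).integrableOn)
    (fun C hC _ => ?_) (hf_sm.mul stronglyMeasurable_condExp).aestronglyMeasurable
  have hC' : MeasurableSet C := hm _ hC
  have step1 : ∫ ω in C, f ω * (μ⟦A | MeasurableSpace.comap W inferInstance⟧) ω ∂μ
      = ∫ ω in C, (f * A.indicator fun _ => (1 : ℝ)) ω ∂μ := by
    rw [← setIntegral_condExp hm hfi_int hC]
    exact setIntegral_congr_ae hC' (hpull.mono fun ω h _ => (h.symm : _))
  have step2 : ∫ ω in C, (f * A.indicator fun _ => (1 : ℝ)) ω ∂μ = ∫ ω in C ∩ A, f ω ∂μ := by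
    have h : ∀ ω, (f * A.indicator fun _ => (1 : ℝ)) ω = A.indicator f ω := by
      intro ω
      by_cases hω : ω ∈ A <;> simp [hω]
    simp_rw [h]
    rw [setIntegral_indicator hA]
  have step3 : ∫ ω in C ∩ A, f ω ∂μ = (μ ((C ∩ V ⁻¹' s) ∩ A)).toReal := by
    rw [hf_setInt (hC'.inter hA), Set.inter_comm C A,
      (aux_key_lint μ W hW V hV hA hA0 hAc0 h_eq hs hC).1]
  calc ∫ ω in C, f ω * (μ⟦A | MeasurableSpace.comap W inferInstance⟧) ω ∂μ
      = (μ ((C ∩ V ⁻¹' s) ∩ A)).toReal := by rw [step1, step2, step3]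
    _ = ∫ ω in C, (V ⁻¹' s ∩ A).indicator (fun _ => (1 : ℝ)) ω ∂μ := by
        rw [integral_indicator_const _ ((hV hs).inter hA),
          measureReal_def, Measure.restrict_apply ((hV hs).inter hA), smul_eq_mul, mul_one]
        congr 1
        rw [Set.inter_assoc, Set.inter_comm]

end Aux

/-- Converse direction (core of the paper's Theorem 1): if (under overlap) the regular
conditional distribution of the potential outcomes `V` given the representation `W` is the
same in the treated group (`μ₁ = μ[·|{T = 1}]`) and the control group (`μ₀ = μ[·|{T = 0}]`),
a.e. with respect to `μ.map W`, then `V` is conditionally independent of `T` given `σ(W)`,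
i.e. the representation satisfies the unconfoundedness assumption. -/
theorem condIndepFun_of_condDistrib_treated_eq_control
    {Ω ℛ : Type*} {mΩ : MeasurableSpace Ω} [StandardBorelSpace Ω]
    [MeasurableSpace ℛ] [StandardBorelSpace ℛ]
    (μ : Measure Ω) [IsProbabilityMeasure μ]
    (W : Ω → ℛ) (hW : Measurable W)
    (V : Ω → ℝ × ℝ) (hV : Measurable V)
    (T : Ω → ℝ) (hT : Measurable T) (hT_bin : ∀ ω, T ω = 0 ∨ T ω = 1)
    (hT1 : 0 < μ {ω | T ω = 1}) (hT1' : μ {ω | T ω = 1} < 1)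
    (h_overlap : ∀ᵐ ω ∂μ,
      0 < (μ[T | MeasurableSpace.comap W inferInstance]) ω ∧
        (μ[T | MeasurableSpace.comap W inferInstance]) ω < 1)
    (h_eq : ∀ᵐ r ∂(μ.map W),
      condDistrib V W (μ[|{ω | T ω = 1}]) r = condDistrib V W (μ[|{ω | T ω = 0}]) r) :
    CondIndepFun (MeasurableSpace.comap W inferInstance) hW.comap_le V T μ := by
  classical
  have hm : MeasurableSpace.comap W inferInstance ≤ mΩ := hW.comap_le
  have hA : MeasurableSet {ω | T ω = 1} := hT (measurableSet_singleton 1)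
  set A : Set Ω := {ω | T ω = 1} with hA_def
  have hAc_eq : {ω | T ω = 0} = Aᶜ := by
    ext ω
    rcases hT_bin ω with h | h <;> simp [hA_def, h]
  have hA0 : μ A ≠ 0 := hT1.ne'
  have hAc0 : μ Aᶜ ≠ 0 := by
    rw [prob_compl_eq_one_sub hA]
    intro h
    exact absurd (tsub_eq_zero_iff_le.mp h) (not_le.mpr hT1')
  rw [hAc_eq] at h_eq
  rw [condIndepFun_iff_condExp_inter_preimage_eq_mul hV hT]
  intro s t hs ht
  obtain ⟨K1, K2⟩ := aux_condexp μ W hW V hV hA hA0 hAc0 h_eq hs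
  have h_eq' : ∀ᵐ r ∂(μ.map W),
      condDistrib V W (μ[|Aᶜ]) r = condDistrib V W (μ[|Aᶜᶜ]) r := by
    have hcc : Aᶜᶜ = A := compl_compl A
    rw [hcc]
    exact h_eq.mono fun r h => h.symm
  obtain ⟨K1', K2'⟩ := aux_condexp μ W hW V hV hA.compl hAc0
    (by rw [compl_compl]; exact hA0) h_eq' hs
  by_cases h1 : (1 : ℝ) ∈ t <;> by_cases h0 : (0 : ℝ) ∈ t
  · -- T ⁻¹' t = univ
    have htu : T ⁻¹' t = univ :=
      eq_univ_of_forall fun ω => by rcases hT_bin ω with h | h <;> simp [h, h0, h1]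
    rw [htu, Set.inter_univ]
    have huniv : (μ⟦(univ : Set Ω) | MeasurableSpace.comap W inferInstance⟧)
        =ᵐ[μ] fun _ => (1 : ℝ) := by
      rw [Set.indicator_univ]
      exact Filter.EventuallyEq.of_eq (condExp_const hm 1)
    filter_upwards [huniv] with ω hω
    rw [hω, mul_one]
  · -- T ⁻¹' t = A
    have htA : T ⁻¹' t = A := by
      ext ω
      rcases hT_bin ω with h | h <;> simp [hA_def, h, h0, h1]
    rw [htA]
    calc μ⟦V ⁻¹' s ∩ A | MeasurableSpace.comap W inferInstance⟧
        =ᵐ[μ] fun ω => (condDistrib V W (μ[|A]) (W ω) s).toReal *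
          (μ⟦A | MeasurableSpace.comap W inferInstance⟧) ω := K2.symm
      _ =ᵐ[μ] fun ω => (μ⟦V ⁻¹' s | MeasurableSpace.comap W inferInstance⟧) ω *
          (μ⟦A | MeasurableSpace.comap W inferInstance⟧) ω := by
          filter_upwards [K1] with ω hω; rw [hω]
  · -- T ⁻¹' t = Aᶜ
    have htA : T ⁻¹' t = Aᶜ := by
      ext ω
      rcases hT_bin ω with h | h <;> simp [hA_def, h, h0, h1]
    rw [htA]
    calc μ⟦V ⁻¹' s ∩ Aᶜ | MeasurableSpace.comap W inferInstance⟧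
        =ᵐ[μ] fun ω => (condDistrib V W (μ[|Aᶜ]) (W ω) s).toReal *
          (μ⟦Aᶜ | MeasurableSpace.comap W inferInstance⟧) ω := K2'.symm
      _ =ᵐ[μ] fun ω => (μ⟦V ⁻¹' s | MeasurableSpace.comap W inferInstance⟧) ω *
          (μ⟦Aᶜ | MeasurableSpace.comap W inferInstance⟧) ω := by
          filter_upwards [K1'] with ω hω; rw [hω]
  · -- T ⁻¹' t = ∅
    have htA : T ⁻¹' t = ∅ := by
      ext ω
      rcases hT_bin ω with h | h <;> simp [h, h0, h1]
    rw [htA, Set.inter_empty]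
    have hz : (μ⟦(∅ : Set Ω) | MeasurableSpace.comap W inferInstance⟧)
        =ᵐ[μ] fun _ => (0 : ℝ) := by
      rw [Set.indicator_empty]
      exact Filter.EventuallyEq.of_eq condExp_zero
    filter_upwards [hz] with ω hω
    rw [hω, mul_zero]
end
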